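/- arXiv:2103.00078 — 8 statements merged into one kernel-verified Lean document; each statement's English description precedes it below -/
import Mathlib

section
/- Let F : F_2^n → F_2^m be a quadratic function and a ∈ F_2^n be nonzero. Then for every b ∈ F_2^m, δ_F(a,b) := #{x : F(x+a)+F(x)=b} is either 0 or equal to 2^{n-r}, where r = rank(Jlin_F(a)); moreover, the number of b ∈ F_2^m with δ_F(a,b) = 2^{n-r} is exactly 2^r. -/
open Matrix

/-- `F : F_2^n → F_2^m` is quadratic: each coordinate is the evaluation of a
polynomial of total degree at most 2 (equivalently, its ANF has degree ≤ 2). -/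
def IsQuadratic {n m : ℕ} (F : (Fin n → ZMod 2) → (Fin m → ZMod 2)) : Prop :=
  ∀ i : Fin m, ∃ p : MvPolynomial (Fin n) (ZMod 2),
    p.totalDegree ≤ 2 ∧ ∀ x, F x i = MvPolynomial.eval x p

/-- Linear part of the Jacobian: entries `Δ_{e_j}F_i(x) + Δ_{e_j}F_i(0)`. -/
def Jlin {n m : ℕ} (F : (Fin n → ZMod 2) → (Fin m → ZMod 2))
    (x : Fin n → ZMod 2) : Matrix (Fin m) (Fin n) (ZMod 2) :=
  Matrix.of fun i j =>
    F (x + Pi.single j 1) i + F x i + F (Pi.single j 1) i + F 0 i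

/-- DDT entry `δ_F(a,b) = #{x : F(x+a)+F(x)=b}`. -/
def ddt {n m : ℕ} (F : (Fin n → ZMod 2) → (Fin m → ZMod 2))
    (a : Fin n → ZMod 2) (b : Fin m → ZMod 2) : ℕ :=
  (Finset.univ.filter fun x => F (x + a) + F x = b).card

/-! ### Auxiliary lemmas -/

lemma zmod2_mul_self : ∀ z : ZMod 2, z * z = z := by decide

lemma zmod2_pow (z : ZMod 2) {k : ℕ} (hk : k ≠ 0) : z ^ k = z := by
  induction k with
  | zero => exact absurd rfl hk
  | succ k ih =>
    rcases Nat.eq_zero_or_pos k with h | h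
    · subst h; exact pow_one z
    · rw [pow_succ, ih h.ne']
      exact zmod2_mul_self z

lemma prod_third_deriv {n : ℕ} (s : Finset (Fin n)) (hs : s.card ≤ 2)
    (u v w : Fin n → ZMod 2) :
    (∏ i ∈ s, (u + v + w) i) + (∏ i ∈ s, (u + v) i) + (∏ i ∈ s, (u + w) i)
      + (∏ i ∈ s, (v + w) i) + (∏ i ∈ s, u i) + (∏ i ∈ s, v i)
      + (∏ i ∈ s, w i) + (∏ i ∈ s, (0 : Fin n → ZMod 2) i) = 0 := by
  have h0 : s.card = 0 ∨ s.card = 1 ∨ s.card = 2 := by omega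
  rcases h0 with h | h | h
  · rw [Finset.card_eq_zero] at h
    subst h
    simp only [Finset.prod_empty]
    decide
  · obtain ⟨i, rfl⟩ := Finset.card_eq_one.mp h
    simp only [Finset.prod_singleton, Pi.add_apply, Pi.zero_apply]
    generalize u i = A
    generalize v i = B
    generalize w i = C
    revert A B C; decide
  · obtain ⟨i, j, hij, rfl⟩ := Finset.card_eq_two.mp h
    simp only [Finset.prod_pair hij, Pi.add_apply, Pi.zero_apply]
    generalize u i = A
    generalize v i = B
    generalize w i = C
    generalize u j = D
    generalize v j = E
    generalize w j = G
    revert A B C D E G; decide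

lemma quad_third_deriv {n : ℕ} (p : MvPolynomial (Fin n) (ZMod 2))
    (hp : p.totalDegree ≤ 2) (u v w : Fin n → ZMod 2) :
    MvPolynomial.eval (u + v + w) p + MvPolynomial.eval (u + v) p
      + MvPolynomial.eval (u + w) p + MvPolynomial.eval (v + w) p
      + MvPolynomial.eval u p + MvPolynomial.eval v p
      + MvPolynomial.eval w p + MvPolynomial.eval 0 p = 0 := by
  conv_lhs => rw [p.as_sum]
  simp only [map_sum]
  simp only [← Finset.sum_add_distrib]
  apply Finset.sum_eq_zero
  intro d hd
  have hdeg : d.support.card ≤ 2 := by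
    have h1 : d.support.card ≤ d.sum fun _ e => e := by
      rw [Finsupp.sum]
      calc d.support.card = ∑ i ∈ d.support, 1 := by simp
        _ ≤ ∑ i ∈ d.support, d i :=
          Finset.sum_le_sum fun i hi =>
            Nat.one_le_iff_ne_zero.mpr (Finsupp.mem_support_iff.mp hi)
    exact h1.trans ((MvPolynomial.le_totalDegree hd).trans hp)
  have hprod : ∀ x : Fin n → ZMod 2,
      MvPolynomial.eval x (MvPolynomial.monomial d (MvPolynomial.coeff d p))
        = MvPolynomial.coeff d p * ∏ i ∈ d.support, x i := by
    intro x
    rw [MvPolynomial.eval_monomial, Finsupp.prod]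
    congr 1
    exact Finset.prod_congr rfl fun i hi =>
      zmod2_pow _ (Finsupp.mem_support_iff.mp hi)
  simp only [hprod]
  simp only [← mul_add]
  rw [prod_third_deriv d.support hdeg u v w, mul_zero]

lemma char2_helper1 : ∀ A B C D E G K L : ZMod 2,
    A + B + C + D + E + G + K + L = 0 →
    A + B + K + L = (C + E + K + L) + (D + G + K + L) := by decide

lemma char2_helper2 : ∀ A B : ZMod 2, A + B + A + B = 0 := by decide

lemma char2_helper3 : ∀ A B K L : ZMod 2, A + B = (A + B + K + L) + (K + L) := by decide

lemma char2_helper4 : ∀ A C : ZMod 2, A = A + C + C := by decide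

lemma char2_helper5 : ∀ A : ZMod 2, A + A = 0 := by decide

lemma vec_add_add_cancel {k : ℕ} (v w : Fin k → ZMod 2) : v + w + w = v := by
  funext i
  simp only [Pi.add_apply]
  exact (char2_helper4 (v i) (w i)).symm

theorem ddt_row_values_of_quadratic {n m : ℕ}
    (F : (Fin n → ZMod 2) → (Fin m → ZMod 2)) (hF : IsQuadratic F)
    (a : Fin n → ZMod 2) (ha : a ≠ 0) :
    (∀ b : Fin m → ZMod 2,
        ddt F a b = 0 ∨ ddt F a b = 2 ^ (n - (Jlin F a).rank)) ∧
    Nat.card {b : Fin m → ZMod 2 | ddt F a b = 2 ^ (n - (Jlin F a).rank)}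
      = 2 ^ (Jlin F a).rank := by
  classical
  set M := Jlin F a with hM
  set c := F a + F 0 with hc
  -- the difference function x ↦ F(x+a)+F(x)+F(a)+F(0)
  set g : (Fin n → ZMod 2) → (Fin m → ZMod 2) :=
    fun x => F (x + a) + F x + F a + F 0 with hgdef
  have hadd : ∀ x y : Fin n → ZMod 2, g (x + y) = g x + g y := by
    intro x y
    funext i
    simp only [hgdef, Pi.add_apply]
    obtain ⟨p, hp2, hpe⟩ := hF i
    have H := quad_third_deriv p hp2 x y a
    simp only [← hpe] at H
    exact char2_helper1 _ _ _ _ _ _ _ _ H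
  have hg0 : g 0 = 0 := by
    funext i
    simp only [hgdef, zero_add, Pi.add_apply, Pi.zero_apply]
    exact char2_helper2 _ _
  have hgsmul : ∀ (r : ZMod 2) (x : Fin n → ZMod 2), g (r • x) = r • g x := by
    intro r x
    have hr : r = 0 ∨ r = 1 := by revert r; decide
    rcases hr with rfl | rfl
    · simp [hg0]
    · simp
  let L : (Fin n → ZMod 2) →ₗ[ZMod 2] (Fin m → ZMod 2) :=
    { toFun := g, map_add' := hadd, map_smul' := hgsmul }
  have hLM : L = M.mulVecLin := by
    apply (Pi.basisFun (ZMod 2) (Fin n)).ext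
    intro j
    simp only [Pi.basisFun_apply, Matrix.mulVecLin_apply, Matrix.mulVec_single_one]
    show g (Pi.single j 1) = _
    funext i
    simp only [hgdef, Pi.add_apply, hM, Jlin, Matrix.col_apply, Matrix.of_apply]
    rw [add_comm (Pi.single j 1) a]
    ring
  have hgM : ∀ x, g x = M *ᵥ x := by
    intro x
    have : L x = M.mulVecLin x := by rw [hLM]
    exact this
  have key : ∀ x, F (x + a) + F x = M *ᵥ x + c := by
    intro x
    have h1 : F (x + a) + F x = g x + c := by
      funext i
      simp only [hgdef, hc, Pi.add_apply]
      exact char2_helper3 _ _ _ _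
    rw [h1, hgM]
  -- solution sets
  have hsol : ∀ b, ddt F a b
      = (Finset.univ.filter fun x => M *ᵥ x = b + c).card := by
    intro b
    unfold ddt
    apply Finset.card_bij (fun x _ => x)
    · intro x hx
      simp only [Finset.mem_filter, Finset.mem_univ, true_and] at hx ⊢
      rw [key] at hx
      rw [← hx, vec_add_add_cancel]
    · intro x y _ _ h; exact h
    · intro x hx
      refine ⟨x, ?_, rfl⟩
      simp only [Finset.mem_filter, Finset.mem_univ, true_and] at hx ⊢
      rw [key, hx, vec_add_add_cancel]
  -- cardinality of the kernel solution set
  have hker_card : (Finset.univ.filter fun x => M *ᵥ x = 0).card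
      = 2 ^ (n - M.rank) := by
    have h1 : (Finset.univ.filter fun x => M *ᵥ x = 0).card
        = Fintype.card (LinearMap.ker M.mulVecLin) := by
      rw [Fintype.card_subtype]
      congr 1
      ext x
      simp [LinearMap.mem_ker, Matrix.mulVecLin_apply]
    have h2 : Fintype.card (LinearMap.ker M.mulVecLin)
        = 2 ^ Module.finrank (ZMod 2) (LinearMap.ker M.mulVecLin) := by
      have := Module.card_eq_pow_finrank (K := ZMod 2) (V := LinearMap.ker M.mulVecLin)
      rwa [ZMod.card] at this
    have h3 : Module.finrank (ZMod 2) (LinearMap.ker M.mulVecLin) = n - M.rank := by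
      have hrn := LinearMap.finrank_range_add_finrank_ker M.mulVecLin
      rw [Module.finrank_pi] at hrn
      have hrank : M.rank = Module.finrank (ZMod 2) (LinearMap.range M.mulVecLin) := rfl
      simp only [Fintype.card_fin] at hrn
      omega
    rw [h1, h2, h3]
  have hfiber : ∀ b x0, M *ᵥ x0 = b + c → ddt F a b = 2 ^ (n - M.rank) := by
    intro b x0 h0
    rw [hsol b, ← hker_card]
    apply Finset.card_nbij' (fun x => x + x0) (fun x => x + x0)
    · intro x hx
      simp only [Finset.mem_coe, Finset.mem_filter, Finset.mem_univ, true_and] at hx ⊢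
      rw [Matrix.mulVec_add, hx, h0]
      funext i
      simp only [Pi.add_apply, Pi.zero_apply]
      exact char2_helper5 _
    · intro x hx
      simp only [Finset.mem_coe, Finset.mem_filter, Finset.mem_univ, true_and] at hx ⊢
      rw [Matrix.mulVec_add, hx, h0, zero_add]
    · intro x _; exact vec_add_add_cancel x x0
    · intro x _; exact vec_add_add_cancel x x0
  have hempty : ∀ b, (¬ ∃ x0, M *ᵥ x0 = b + c) → ddt F a b = 0 := by
    intro b hb
    rw [hsol b, Finset.card_eq_zero, Finset.filter_eq_empty_iff]
    intro x _
    exact fun h => hb ⟨x, h⟩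
  have hpow_ne : (2 : ℕ) ^ (n - M.rank) ≠ 0 := pow_ne_zero _ two_ne_zero
  have hiff : ∀ b, ddt F a b = 2 ^ (n - M.rank)
      ↔ b + c ∈ LinearMap.range M.mulVecLin := by
    intro b
    constructor
    · intro h
      by_contra hb
      have h0 : ddt F a b = 0 := by
        apply hempty
        intro ⟨x0, hx0⟩
        exact hb ⟨x0, by simpa [Matrix.mulVecLin_apply] using hx0⟩
      rw [h0] at h
      exact hpow_ne h.symm
    · rintro ⟨x0, hx0⟩
      exact hfiber b x0 (by simpa [Matrix.mulVecLin_apply] using hx0)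
  constructor
  · intro b
    by_cases hb : b + c ∈ LinearMap.range M.mulVecLin
    · exact Or.inr ((hiff b).mpr hb)
    · refine Or.inl (hempty b ?_)
      intro ⟨x0, hx0⟩
      exact hb ⟨x0, by simpa [Matrix.mulVecLin_apply] using hx0⟩
  · -- count of good b's
    have hset : {b : Fin m → ZMod 2 | ddt F a b = 2 ^ (n - M.rank)}
        = {b : Fin m → ZMod 2 | b + c ∈ LinearMap.range M.mulVecLin} := by
      ext b
      exact hiff b
    rw [hset]
    have e : {b : Fin m → ZMod 2 | b + c ∈ LinearMap.range M.mulVecLin}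
        ≃ LinearMap.range M.mulVecLin :=
      { toFun := fun b => ⟨b.1 + c, b.2⟩
        invFun := fun y => ⟨y.1 + c, by
          simp only [Set.mem_setOf_eq, vec_add_add_cancel]
          exact y.2⟩
        left_inv := fun b => Subtype.ext (vec_add_add_cancel _ _)
        right_inv := fun y => Subtype.ext (vec_add_add_cancel _ _) }
    rw [Nat.card_congr e]
    have h2 : Nat.card (LinearMap.range M.mulVecLin)
        = 2 ^ Module.finrank (ZMod 2) (LinearMap.range M.mulVecLin) := by
      rw [Nat.card_eq_fintype_card]
      have := Module.card_eq_pow_finrank (K := ZMod 2) (V := LinearMap.range M.mulVecLin)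
      rwa [ZMod.card] at this
    rw [h2]
    rfl
end

section
/- Let F : F_2^n → F_2^m be a quadratic function. For 0 ≤ r ≤ min(m,n), let RkDist_F[r] = #{a ∈ F_2^n : rank(Jlin_F(a)) = r} and let D_F[k] = #{(a,b) ∈ (F_2^n \ {0}) × F_2^m : δ_F(a,b) = k}. Then for every r, RkDist_F[r] = 2^{-r} · D_F[2^{n-r}], i.e., 2^r · RkDist_F[r] = D_F[2^{n-r}]. -/
open Matrix

namespace RkAux

lemma zmod2_cases : ∀ c : ZMod 2, c = 0 ∨ c = 1 := by decide

lemma zmod2_pow (a : ZMod 2) {k : ℕ} (hk : k ≠ 0) : a ^ k = a := by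
  rcases zmod2_cases a with h | h <;> subst h
  · simp [zero_pow hk]
  · simp

variable {n m : ℕ}

lemma prod_cube (s : Finset (Fin n)) (hs : s.card ≤ 2) (x y a : Fin n → ZMod 2) :
    (∏ j ∈ s, (x + y + a) j) + (∏ j ∈ s, (x + y) j) + (∏ j ∈ s, (x + a) j)
      + (∏ j ∈ s, (y + a) j) + (∏ j ∈ s, x j) + (∏ j ∈ s, y j)
      + (∏ j ∈ s, a j) + (∏ j ∈ s, (0 : Fin n → ZMod 2) j) = 0 := by
  obtain h | h | h : s.card = 0 ∨ s.card = 1 ∨ s.card = 2 := by omega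
  · rw [Finset.card_eq_zero] at h
    subst h
    simp only [Finset.prod_empty]
    decide
  · rw [Finset.card_eq_one] at h
    obtain ⟨j, rfl⟩ := h
    simp only [Finset.prod_singleton, Pi.add_apply, Pi.zero_apply]
    generalize x j = u
    generalize y j = v
    generalize a j = w
    revert u v w
    decide
  · rw [Finset.card_eq_two] at h
    obtain ⟨j, k, hjk, rfl⟩ := h
    simp only [Finset.prod_pair hjk, Pi.add_apply, Pi.zero_apply]
    generalize x j = u1
    generalize x k = u2
    generalize y j = v1
    generalize y k = v2
    generalize a j = w1
    generalize a k = w2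
    revert u1 u2 v1 v2 w1 w2
    decide

lemma cube {F : (Fin n → ZMod 2) → (Fin m → ZMod 2)} (hF : IsQuadratic F)
    (i : Fin m) (x y a : Fin n → ZMod 2) :
    F (x + y + a) i + F (x + y) i + F (x + a) i + F (y + a) i
      + F x i + F y i + F a i + F 0 i = 0 := by
  obtain ⟨p, hdeg, hp⟩ := hF i
  simp only [hp]
  have key : ∀ v : Fin n → ZMod 2, MvPolynomial.eval v p
      = ∑ d ∈ p.support, (MvPolynomial.coeff d p) * ∏ j ∈ d.support, v j := by
    intro v
    conv_lhs => rw [MvPolynomial.as_sum p]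
    rw [map_sum]
    refine Finset.sum_congr rfl fun d _ => ?_
    rw [MvPolynomial.eval_monomial]
    congr 1
    rw [Finsupp.prod]
    exact Finset.prod_congr rfl fun j hj => zmod2_pow _ (Finsupp.mem_support_iff.mp hj)
  simp only [key]
  rw [← Finset.sum_add_distrib, ← Finset.sum_add_distrib, ← Finset.sum_add_distrib,
    ← Finset.sum_add_distrib, ← Finset.sum_add_distrib, ← Finset.sum_add_distrib,
    ← Finset.sum_add_distrib]
  refine Finset.sum_eq_zero fun d hd => ?_
  have hcard : d.support.card ≤ 2 := by
    have h1 : d.support.card ≤ d.sum fun _ e => e := by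
      rw [Finsupp.sum]
      calc d.support.card = ∑ _j ∈ d.support, 1 := by simp
        _ ≤ ∑ j ∈ d.support, d j :=
          Finset.sum_le_sum fun j hj =>
            Nat.one_le_iff_ne_zero.mpr (Finsupp.mem_support_iff.mp hj)
    exact h1.trans ((MvPolynomial.le_totalDegree hd).trans hdeg)
  rw [← mul_add, ← mul_add, ← mul_add, ← mul_add, ← mul_add, ← mul_add, ← mul_add,
    prod_cube d.support hcard x y a, mul_zero]

/-- The bilinear part of `F` at `a`, as a function of `x`. -/
def phi {n m : ℕ} (F : (Fin n → ZMod 2) → (Fin m → ZMod 2))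
    (a : Fin n → ZMod 2) (v : Fin n → ZMod 2) : Fin m → ZMod 2 :=
  F (v + a) + F v + F a + F 0

lemma phi_add {F : (Fin n → ZMod 2) → (Fin m → ZMod 2)} (hF : IsQuadratic F)
    (a u v : Fin n → ZMod 2) : phi F a (u + v) = phi F a u + phi F a v := by
  funext i
  have H := cube hF i u v a
  have hz : ∀ z : ZMod 2, z + z = 0 := by decide
  simp only [phi, Pi.add_apply]
  linear_combination H - hz (F (u + a) i + F u i + F (v + a) i + F v i + F a i + F 0 i)

lemma phi_zero {F : (Fin n → ZMod 2) → (Fin m → ZMod 2)}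
    (a : Fin n → ZMod 2) : phi F a 0 = 0 := by
  funext i
  have hz : ∀ z : ZMod 2, z + z = 0 := by decide
  simp only [phi, Pi.add_apply, zero_add, Pi.zero_apply]
  linear_combination hz (F a i) + hz (F 0 i)

lemma phi_single {F : (Fin n → ZMod 2) → (Fin m → ZMod 2)} (a : Fin n → ZMod 2)
    (j : Fin n) (c : ZMod 2) (i : Fin m) :
    phi F a (Pi.single j c) i = phi F a (Pi.single j 1) i * c := by
  rcases zmod2_cases c with h | h <;> subst h
  · simp [phi_zero]
  · simp

lemma jlin_mulVec {F : (Fin n → ZMod 2) → (Fin m → ZMod 2)} (hF : IsQuadratic F)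
    (a x : Fin n → ZMod 2) : (Jlin F a) *ᵥ x = phi F a x := by
  funext i
  have hsum : phi F a x = ∑ j, phi F a (Pi.single j (x j)) := by
    conv_lhs => rw [← Finset.univ_sum_single x]
    exact map_sum (AddMonoidHom.mk' (phi F a) (phi_add hF a)) _ _
  have : phi F a x i = ∑ j, phi F a (Pi.single j 1) i * x j := by
    rw [hsum]
    rw [Finset.sum_apply]
    exact Finset.sum_congr rfl fun j _ => phi_single a j (x j) i
  rw [this, Matrix.mulVec, dotProduct]
  refine Finset.sum_congr rfl fun j _ => ?_
  congr 1
  simp only [Jlin, Matrix.of_apply, phi, Pi.add_apply, Pi.zero_apply]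
  ring_nf

lemma ddt_eq_card {F : (Fin n → ZMod 2) → (Fin m → ZMod 2)} (hF : IsQuadratic F)
    (a : Fin n → ZMod 2) (b : Fin m → ZMod 2) :
    ddt F a b = Nat.card {x | (Jlin F a).mulVecLin x = b + F a + F 0} := by
  classical
  rw [ddt, Nat.card_eq_fintype_card, Fintype.card_subtype]
  congr 1
  ext x
  simp only [Finset.mem_filter, Finset.mem_univ, true_and, Set.mem_setOf_eq,
    Matrix.mulVecLin_apply, jlin_mulVec hF, phi]
  constructor
  · intro h
    rw [h]
  · intro h
    exact (add_left_inj _).mp ((add_left_inj _).mp h)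

lemma card_fiber_of_mem {L : (Fin n → ZMod 2) →ₗ[ZMod 2] (Fin m → ZMod 2)}
    {c : Fin m → ZMod 2} (hc : c ∈ LinearMap.range L) :
    Nat.card {x | L x = c} = Nat.card (LinearMap.ker L) := by
  obtain ⟨x0, hx0⟩ := hc
  refine Nat.card_congr (Equiv.symm ⟨fun k => ⟨x0 + k.1, ?_⟩, fun x => ⟨x.1 - x0, ?_⟩,
    fun k => ?_, fun x => ?_⟩)
  · have hk := k.2
    rw [LinearMap.mem_ker] at hk
    simp [Set.mem_setOf_eq, map_add, hx0, hk]
  · have hx := x.2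
    simp only [Set.mem_setOf_eq] at hx
    rw [LinearMap.mem_ker, map_sub, hx, hx0, sub_self]
  · exact Subtype.ext (add_sub_cancel_left x0 k.1)
  · exact Subtype.ext (add_sub_cancel x0 x.1)

lemma card_ker (L : (Fin n → ZMod 2) →ₗ[ZMod 2] (Fin m → ZMod 2)) :
    Nat.card (LinearMap.ker L)
      = 2 ^ (n - Module.finrank (ZMod 2) (LinearMap.range L)) := by
  have h1 := LinearMap.finrank_range_add_finrank_ker L
  rw [Module.finrank_pi, Fintype.card_fin] at h1
  have : Fintype (LinearMap.ker L) := Fintype.ofFinite _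
  rw [Nat.card_eq_fintype_card, Module.card_eq_pow_finrank (K := ZMod 2), ZMod.card]
  congr 1
  omega

lemma range_card (L : (Fin n → ZMod 2) →ₗ[ZMod 2] (Fin m → ZMod 2)) :
    Nat.card (LinearMap.range L) = 2 ^ Module.finrank (ZMod 2) (LinearMap.range L) := by
  have : Fintype (LinearMap.range L) := Fintype.ofFinite _
  rw [Nat.card_eq_fintype_card, Module.card_eq_pow_finrank (K := ZMod 2), ZMod.card]

lemma ddt_val_mem {F : (Fin n → ZMod 2) → (Fin m → ZMod 2)} (hF : IsQuadratic F)
    {a : Fin n → ZMod 2} {b : Fin m → ZMod 2}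
    (hmem : (b + F a + F 0) ∈ LinearMap.range (Jlin F a).mulVecLin) :
    ddt F a b = 2 ^ (n - (Jlin F a).rank) := by
  rw [ddt_eq_card hF, card_fiber_of_mem hmem, card_ker, Matrix.rank]

lemma ddt_val_not_mem {F : (Fin n → ZMod 2) → (Fin m → ZMod 2)} (hF : IsQuadratic F)
    {a : Fin n → ZMod 2} {b : Fin m → ZMod 2}
    (hmem : (b + F a + F 0) ∉ LinearMap.range (Jlin F a).mulVecLin) :
    ddt F a b = 0 := by
  rw [ddt_eq_card hF]
  have he : {x | (Jlin F a).mulVecLin x = b + F a + F 0} = ∅ := by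
    ext x
    simp only [Set.mem_setOf_eq, Set.mem_empty_iff_false, iff_false]
    exact fun hx => hmem ⟨x, hx⟩
  rw [he]
  simp

lemma count_b {F : (Fin n → ZMod 2) → (Fin m → ZMod 2)} (hF : IsQuadratic F)
    {r : ℕ} (hrn : r ≤ n) (a : Fin n → ZMod 2) :
    (Finset.univ.filter fun b : Fin m → ZMod 2
        => a ≠ 0 ∧ ddt F a b = 2 ^ (n - r)).card
      = if a ≠ 0 ∧ (Jlin F a).rank = r then 2 ^ r else 0 := by
  classical
  by_cases ha : a = 0
  · simp [ha]
  by_cases hrk : (Jlin F a).rank = r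
  · rw [if_pos ⟨ha, hrk⟩]
    have hfilter : (Finset.univ.filter fun b : Fin m → ZMod 2
        => a ≠ 0 ∧ ddt F a b = 2 ^ (n - r)).card
        = (Finset.univ.filter fun b : Fin m → ZMod 2
        => (b + F a + F 0) ∈ LinearMap.range (Jlin F a).mulVecLin).card := by
      congr 1
      apply Finset.filter_congr
      intro b _
      constructor
      · rintro ⟨-, h⟩
        by_contra hmem
        rw [ddt_val_not_mem hF hmem] at h
        exact (Nat.pow_pos (by norm_num : 0 < 2)).ne' h.symm
      · intro hmem
        exact ⟨ha, by rw [ddt_val_mem hF hmem, hrk]⟩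
    rw [hfilter]
    have hcongr : (Finset.univ.filter fun b : Fin m → ZMod 2
        => (b + F a + F 0) ∈ LinearMap.range (Jlin F a).mulVecLin).card
        = Nat.card (LinearMap.range (Jlin F a).mulVecLin) := by
      rw [← Fintype.card_subtype]
      have : Fintype (LinearMap.range (Jlin F a).mulVecLin) := Fintype.ofFinite _
      rw [Nat.card_eq_fintype_card]
      refine Fintype.card_congr ⟨fun b => ⟨b.1 + F a + F 0, b.2⟩,
        fun s => ⟨s.1 - F 0 - F a, ?_⟩, fun b => ?_, fun s => ?_⟩
      · have : s.1 - F 0 - F a + F a + F 0 = s.1 := by abel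
        rw [this]
        exact s.2
      · ext1
        dsimp only
        rw [add_sub_cancel_right, add_sub_cancel_right]
      · ext1
        dsimp only
        rw [sub_add_cancel, sub_add_cancel]
    rw [hcongr, range_card, ← Matrix.rank, hrk]
  · rw [if_neg (by tauto)]
    rw [Finset.card_eq_zero, Finset.filter_eq_empty_iff]
    rintro b - ⟨-, hd⟩
    have hr2 : (Jlin F a).rank ≤ n := Matrix.rank_le_width _
    rcases em ((b + F a + F 0) ∈ LinearMap.range (Jlin F a).mulVecLin) with hmem | hmem
    · rw [ddt_val_mem hF hmem] at hd
      have := Nat.pow_right_injective (le_refl 2) hd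
      omega
    · rw [ddt_val_not_mem hF hmem] at hd
      exact (Nat.pow_pos (by norm_num : 0 < 2)).ne' hd.symm

end RkAux

theorem rank_distribution_vs_differential_spectrum {n m : ℕ}
    (F : (Fin n → ZMod 2) → (Fin m → ZMod 2)) (hF : IsQuadratic F)
    (r : ℕ) (hr : r ≤ min m n) :
    2 ^ r * Nat.card {a : Fin n → ZMod 2 | a ≠ 0 ∧ (Jlin F a).rank = r}
      = Nat.card {p : (Fin n → ZMod 2) × (Fin m → ZMod 2) |
          p.1 ≠ 0 ∧ ddt F p.1 p.2 = 2 ^ (n - r)} := by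
  classical
  have hrn : r ≤ n := hr.trans (min_le_right m n)
  have hL : Nat.card {a : Fin n → ZMod 2 | a ≠ 0 ∧ (Jlin F a).rank = r}
      = (Finset.univ.filter fun a : Fin n → ZMod 2
          => a ≠ 0 ∧ (Jlin F a).rank = r).card := by
    rw [Nat.card_eq_fintype_card, Fintype.card_subtype]
    simp only [Set.mem_setOf_eq]
  have hR : Nat.card {p : (Fin n → ZMod 2) × (Fin m → ZMod 2) |
          p.1 ≠ 0 ∧ ddt F p.1 p.2 = 2 ^ (n - r)}
      = (Finset.univ.filter fun p : (Fin n → ZMod 2) × (Fin m → ZMod 2)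
          => p.1 ≠ 0 ∧ ddt F p.1 p.2 = 2 ^ (n - r)).card := by
    rw [Nat.card_eq_fintype_card, Fintype.card_subtype]
    simp only [Set.mem_setOf_eq]
  rw [hL, hR]
  have hprod : (Finset.univ.filter fun p : (Fin n → ZMod 2) × (Fin m → ZMod 2)
      => p.1 ≠ 0 ∧ ddt F p.1 p.2 = 2 ^ (n - r)).card
      = ∑ a : Fin n → ZMod 2, (Finset.univ.filter fun b : Fin m → ZMod 2
      => a ≠ 0 ∧ ddt F a b = 2 ^ (n - r)).card := by
    simp only [Finset.card_filter, Fintype.sum_prod_type]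
  rw [hprod]
  rw [Finset.sum_congr rfl fun a _ => RkAux.count_b hF hrn a]
  rw [← Finset.sum_filter]
  rw [Finset.sum_const, smul_eq_mul, mul_comm]
end

section
/- Let F : F_2^n → F_2^m be a quadratic function with n ≥ 1. Then F is APN (i.e., δ_F(a,b) ≤ 2 for all nonzero a and all b) if and only if Jlin_F(x) has rank n−1 for every nonzero x ∈ F_2^n. -/
open Matrix

lemma zmod2_two : (2 : ZMod 2) = 0 := by decide

lemma zmod2_add_self (z : ZMod 2) : z + z = 0 := by revert z; decide

lemma pi_add_self {k : ℕ} (v : Fin k → ZMod 2) : v + v = 0 :=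
  funext fun i => zmod2_add_self (v i)

lemma eval_monomial_zmod2 {n : ℕ} (x : Fin n → ZMod 2) (d : Fin n →₀ ℕ) (c : ZMod 2) :
    MvPolynomial.eval x (MvPolynomial.monomial d c) = c * ∏ i ∈ d.support, x i := by
  rw [MvPolynomial.eval_monomial]
  congr 1
  rw [Finsupp.prod]
  exact Finset.prod_congr rfl fun i hi => zmod2_pow _ (Finsupp.mem_support_iff.mp hi)

lemma second_diff_prod {n : ℕ} (S : Finset (Fin n)) (hS : S.card ≤ 2)
    (x a b : Fin n → ZMod 2) :
    (∏ i ∈ S, (x + a + b) i) + (∏ i ∈ S, (x + a) i) + (∏ i ∈ S, (x + b) i)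
      + (∏ i ∈ S, x i)
      = (∏ i ∈ S, (a + b) i) + (∏ i ∈ S, a i) + (∏ i ∈ S, b i)
      + (∏ i ∈ S, (0 : Fin n → ZMod 2) i) := by
  interval_cases h : S.card
  · rw [Finset.card_eq_zero.mp h]; simp
  · obtain ⟨i, rfl⟩ := Finset.card_eq_one.mp h
    simp only [Finset.prod_singleton, Pi.add_apply, Pi.zero_apply]
    generalize x i = u; generalize a i = v; generalize b i = w
    revert u v w; decide
  · obtain ⟨i, j, hij, rfl⟩ := Finset.card_eq_two.mp h
    simp only [Finset.prod_pair hij, Pi.add_apply, Pi.zero_apply]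
    generalize x i = u1; generalize a i = v1; generalize b i = w1
    generalize x j = u2; generalize a j = v2; generalize b j = w2
    revert u1 v1 w1 u2 v2 w2; decide

lemma second_diff_monomial {n : ℕ} (d : Fin n →₀ ℕ) (c : ZMod 2)
    (hd : d.support.card ≤ 2) (x a b : Fin n → ZMod 2) :
    MvPolynomial.eval (x + a + b) (MvPolynomial.monomial d c)
      + MvPolynomial.eval (x + a) (MvPolynomial.monomial d c)
      + MvPolynomial.eval (x + b) (MvPolynomial.monomial d c)
      + MvPolynomial.eval x (MvPolynomial.monomial d c)
      = MvPolynomial.eval (a + b) (MvPolynomial.monomial d c)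
      + MvPolynomial.eval a (MvPolynomial.monomial d c)
      + MvPolynomial.eval b (MvPolynomial.monomial d c)
      + MvPolynomial.eval (0 : Fin n → ZMod 2) (MvPolynomial.monomial d c) := by
  simp only [eval_monomial_zmod2, ← mul_add]
  exact congrArg (c * ·) (second_diff_prod d.support hd x a b)

lemma second_diff_eval {n : ℕ} (p : MvPolynomial (Fin n) (ZMod 2))
    (hp : p.totalDegree ≤ 2) (x a b : Fin n → ZMod 2) :
    MvPolynomial.eval (x + a + b) p + MvPolynomial.eval (x + a) p
      + MvPolynomial.eval (x + b) p + MvPolynomial.eval x p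
      = MvPolynomial.eval (a + b) p + MvPolynomial.eval a p
      + MvPolynomial.eval b p + MvPolynomial.eval (0 : Fin n → ZMod 2) p := by
  have key : ∀ (s : Finset (Fin n →₀ ℕ)) (f : (Fin n →₀ ℕ) → ZMod 2),
      (∀ d ∈ s, d.support.card ≤ 2) →
      MvPolynomial.eval (x + a + b) (∑ d ∈ s, MvPolynomial.monomial d (f d))
        + MvPolynomial.eval (x + a) (∑ d ∈ s, MvPolynomial.monomial d (f d))
        + MvPolynomial.eval (x + b) (∑ d ∈ s, MvPolynomial.monomial d (f d))
        + MvPolynomial.eval x (∑ d ∈ s, MvPolynomial.monomial d (f d))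
      = MvPolynomial.eval (a + b) (∑ d ∈ s, MvPolynomial.monomial d (f d))
        + MvPolynomial.eval a (∑ d ∈ s, MvPolynomial.monomial d (f d))
        + MvPolynomial.eval b (∑ d ∈ s, MvPolynomial.monomial d (f d))
        + MvPolynomial.eval (0 : Fin n → ZMod 2) (∑ d ∈ s, MvPolynomial.monomial d (f d)) := by
    intro s f hs
    simp only [map_sum, ← Finset.sum_add_distrib]
    exact Finset.sum_congr rfl fun d hd => second_diff_monomial d (f d) (hs d hd) x a b
  have hsupp : ∀ d ∈ p.support, d.support.card ≤ 2 := by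
    intro d hd
    have h1 : d.support.card ≤ d.sum fun _ e => e := by
      rw [Finsupp.sum]
      calc d.support.card = ∑ i ∈ d.support, 1 := by simp
        _ ≤ ∑ i ∈ d.support, d i :=
          Finset.sum_le_sum fun i hi =>
            Nat.one_le_iff_ne_zero.mpr (Finsupp.mem_support_iff.mp hi)
    exact h1.trans ((MvPolynomial.le_totalDegree hd).trans hp)
  have := key p.support (fun d => MvPolynomial.coeff d p) hsupp
  rwa [MvPolynomial.support_sum_monomial_coeff] at this

/-- The bilinear-in-the-second-argument linear map `v ↦ F(a+v)+F(a)+F(v)+F(0)`. -/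
def Lmap {n m : ℕ} (F : (Fin n → ZMod 2) → (Fin m → ZMod 2))
    (hB : ∀ x a b : Fin n → ZMod 2, ∀ i,
      F (x + a + b) i + F (x + a) i + F (x + b) i + F x i
        = F (a + b) i + F a i + F b i + F 0 i)
    (a : Fin n → ZMod 2) : (Fin n → ZMod 2) →ₗ[ZMod 2] (Fin m → ZMod 2) where
  toFun v := F (a + v) + F a + F v + F 0
  map_add' u v := by
    funext i
    have h := hB a u v i
    simp only [Pi.add_apply]
    rw [show a + (u + v) = a + u + v from (add_assoc a u v).symm]
    linear_combination (norm := (ring_nf; try simp [zmod2_two])) h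
  map_smul' c v := by
    fin_cases c
    · show F (a + (0 : ZMod 2) • v) + F a + F ((0 : ZMod 2) • v) + F 0
        = (0 : ZMod 2) • (F (a + v) + F a + F v + F 0)
      rw [zero_smul, zero_smul, add_zero]
      funext i
      simp only [Pi.add_apply, Pi.zero_apply]
      linear_combination (norm := (ring_nf; try simp [zmod2_two]))
    · show F (a + (1 : ZMod 2) • v) + F a + F ((1 : ZMod 2) • v) + F 0
        = (1 : ZMod 2) • (F (a + v) + F a + F v + F 0)
      rw [one_smul, one_smul]

theorem apn_iff_jlin_rank {n m : ℕ} (hn : 1 ≤ n)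
    (F : (Fin n → ZMod 2) → (Fin m → ZMod 2)) (hF : IsQuadratic F) :
    (∀ a : Fin n → ZMod 2, a ≠ 0 → ∀ b : Fin m → ZMod 2, ddt F a b ≤ 2) ↔
      (∀ x : Fin n → ZMod 2, x ≠ 0 → (Jlin F x).rank = n - 1) := by
  classical
  -- second differences are constant
  have hB : ∀ x a b : Fin n → ZMod 2, ∀ i,
      F (x + a + b) i + F (x + a) i + F (x + b) i + F x i
        = F (a + b) i + F a i + F b i + F 0 i := by
    intro x a b i
    obtain ⟨p, hp, he⟩ := hF i
    simp only [he]
    exact second_diff_eval p hp x a b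
  set L : (Fin n → ZMod 2) → (Fin n → ZMod 2) →ₗ[ZMod 2] (Fin m → ZMod 2) :=
    Lmap F hB with hL
  have hLapply : ∀ a v, L a v = F (a + v) + F a + F v + F 0 := fun a v => rfl
  -- Jlin is the matrix of L
  have hJ : ∀ a, Jlin F a = LinearMap.toMatrix' (L a) := by
    intro a
    ext i j
    rw [LinearMap.toMatrix'_apply]
    have hsingle : (fun j' => if j' = j then (1 : ZMod 2) else 0) = Pi.single j 1 :=
      funext fun j' => (Pi.single_apply j 1 j').symm
    rw [hLapply]
    rfl
  have hrank : ∀ a, (Jlin F a).rank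
      = Module.finrank (ZMod 2) (LinearMap.range (L a)) := by
    intro a
    rw [hJ a, Matrix.rank,
      show (LinearMap.toMatrix' (L a)).mulVecLin = L a from by
        rw [← Matrix.toLin'_apply', Matrix.toLin'_toMatrix']]
  have hrn : ∀ a, Module.finrank (ZMod 2) (LinearMap.range (L a))
      + Module.finrank (ZMod 2) (LinearMap.ker (L a)) = n := by
    intro a
    rw [LinearMap.finrank_range_add_finrank_ker, Module.finrank_fin_fun]
  -- a is in the kernel of L a
  have hkermem : ∀ a, a ∈ LinearMap.ker (L a) := by
    intro a
    rw [LinearMap.mem_ker, hLapply, pi_add_self]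
    funext i
    simp only [Pi.add_apply, Pi.zero_apply]
    linear_combination (norm := (ring_nf; try simp [zmod2_two]))
  -- kernel cardinality
  have hcard : ∀ a, Fintype.card (LinearMap.ker (L a))
      = 2 ^ Module.finrank (ZMod 2) (LinearMap.ker (L a)) := by
    intro a
    rw [Module.card_eq_pow_finrank (K := ZMod 2), ZMod.card]
  have hfilter : ∀ a, (Finset.univ.filter fun y => L a y = 0).card
      = Fintype.card (LinearMap.ker (L a)) := by
    intro a
    have he : (Finset.univ.filter fun y => L a y = 0)
        = Finset.univ.filter fun y => y ∈ LinearMap.ker (L a) :=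
      Finset.filter_congr fun y _ => (LinearMap.mem_ker).symm
    rw [he]
    exact (Fintype.card_subtype _).symm
  -- ddt in terms of L
  have hddt : ∀ a b, ddt F a b
      = (Finset.univ.filter fun x => L a x = b + F a + F 0).card := by
    intro a b
    unfold ddt
    congr 1
    apply Finset.filter_congr
    intro x _
    rw [hLapply]
    constructor
    · intro h
      funext i
      have hi := congrFun h i
      simp only [Pi.add_apply] at hi ⊢
      rw [add_comm a x]
      linear_combination (norm := (ring_nf; try simp [zmod2_two])) hi
    · intro h
      funext i
      have hi := congrFun h i
      simp only [Pi.add_apply] at hi ⊢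
      rw [add_comm x a]
      linear_combination (norm := (ring_nf; try simp [zmod2_two])) hi
  have hkerpos : ∀ a, a ≠ 0 → 1 ≤ Module.finrank (ZMod 2) (LinearMap.ker (L a)) := by
    intro a ha
    haveI : Nontrivial (LinearMap.ker (L a)) :=
      ⟨⟨⟨a, hkermem a⟩, 0, fun hc => ha (by simpa using Subtype.ext_iff.mp hc)⟩⟩
    exact Module.finrank_pos
  constructor
  · intro hAPN x hx
    have h2 := hAPN x hx (F x + F 0)
    rw [hddt] at h2
    have hc0 : F x + F 0 + F x + F 0 = (0 : Fin m → ZMod 2) := by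
      funext i
      simp only [Pi.add_apply, Pi.zero_apply]
      linear_combination (norm := (ring_nf; try simp [zmod2_two]))
    have hfe : (Finset.univ.filter fun y => L x y = F x + F 0 + F x + F 0)
        = Finset.univ.filter fun y => L x y = 0 := by
      apply Finset.filter_congr
      intro y _
      rw [hc0]
    rw [hfe] at h2
    rw [hfilter, hcard] at h2
    have hk1 : Module.finrank (ZMod 2) (LinearMap.ker (L x)) ≤ 1 := by
      by_contra hk
      push_neg at hk
      have : 2 ^ 2 ≤ 2 ^ Module.finrank (ZMod 2) (LinearMap.ker (L x)) :=
        Nat.pow_le_pow_right (by norm_num) hk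
      omega
    have hk := hkerpos x hx
    have := hrn x
    rw [hrank]
    omega
  · intro hR a ha b
    have hr := hR a ha
    rw [hrank] at hr
    have hker1 : Module.finrank (ZMod 2) (LinearMap.ker (L a)) = 1 := by
      have := hrn a; have := hkerpos a ha; omega
    rw [hddt]
    rcases Finset.eq_empty_or_nonempty
      (Finset.univ.filter fun x => L a x = b + F a + F 0) with h0 | ⟨x0, hx0⟩
    · rw [h0]; simp
    · have hx0' : L a x0 = b + F a + F 0 := (Finset.mem_filter.mp hx0).2
      have hle : (Finset.univ.filter fun x => L a x = b + F a + F 0).card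
          ≤ (Finset.univ.filter fun y => L a y = 0).card := by
        apply Finset.card_le_card_of_injOn (fun x => x + x0)
        · intro x hxm
          have hxm' : L a x = b + F a + F 0 := (Finset.mem_filter.mp hxm).2
          simp only [Finset.mem_coe, Finset.mem_filter, Finset.mem_univ, true_and, map_add,
            hxm', hx0']
          exact pi_add_self _
        · intro x _ y _ hxy
          have := congrArg (· + x0) hxy
          simpa [add_assoc, pi_add_self] using this
      rw [hfilter, hcard, hker1] at hle
      exact hle.trans (by norm_num)
end

section
/- Let F : F_2^n → F_2^n be a quadratic function. Then F is APN if and only if there exists a unique function π : F_2^n → F_2^n with π(0)=0 and π(x) ≠ 0 for all x ≠ 0 such that for all x, a ∈ F_2^n, ⟨π(a), F(x)+F(x+a)+F(0)+F(a)⟩ = 0, where ⟨·,·⟩ is the canonical inner product on F_2^n. -/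
open Matrix

namespace APNaux

open MvPolynomial

lemma zmod2_mul_self (t : ZMod 2) : t * t = t := by revert t; decide

lemma zmod2_pow (t : ZMod 2) {k : ℕ} (hk : 1 ≤ k) : t ^ k = t := by
  induction k with
  | zero => omega
  | succ m ih =>
    rcases Nat.eq_or_lt_of_le hk with h | h
    · simp [← h]
    · have hm : 1 ≤ m := by omega
      rw [pow_succ, ih hm, zmod2_mul_self]

lemma thirdDiff_poly {n : ℕ} (p : MvPolynomial (Fin n) (ZMod 2)) (hp : p.totalDegree ≤ 2)
    (x y z : Fin n → ZMod 2) :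
    eval (x+y+z) p + eval (x+y) p + eval (x+z) p + eval (y+z) p
      + eval x p + eval y p + eval z p + eval 0 p = 0 := by
  conv_lhs => rw [← p.support_sum_monomial_coeff]
  simp only [map_sum, ← Finset.sum_add_distrib]
  apply Finset.sum_eq_zero
  intro s hs
  have hdeg : (s.sum fun _ e => e) ≤ 2 := le_trans (MvPolynomial.le_totalDegree hs) hp
  have hcard : s.support.card ≤ 2 := by
    calc s.support.card = ∑ i ∈ s.support, 1 := by simp
    _ ≤ ∑ i ∈ s.support, s i := Finset.sum_le_sum (fun i hi => by
        have := Finsupp.mem_support_iff.mp hi; omega)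
    _ = s.sum fun _ e => e := by rw [Finsupp.sum]
    _ ≤ 2 := hdeg
  have heval : ∀ v : Fin n → ZMod 2, eval v (monomial s (coeff s p))
      = coeff s p * ∏ i ∈ s.support, v i := by
    intro v
    rw [eval_monomial, Finsupp.prod]
    congr 1
    exact Finset.prod_congr rfl fun i hi =>
      zmod2_pow (v i) (Nat.one_le_iff_ne_zero.mpr (Finsupp.mem_support_iff.mp hi))
  simp only [heval]
  clear heval hdeg hs hp
  interval_cases h : s.support.card
  · rw [Finset.card_eq_zero] at h
    simp only [h, Finset.prod_empty]
    generalize coeff s p = c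
    revert c; decide
  · obtain ⟨i, hi⟩ := Finset.card_eq_one.mp h
    simp only [hi, Finset.prod_singleton, Pi.add_apply, Pi.zero_apply]
    generalize coeff s p = c; generalize x i = A; generalize y i = B; generalize z i = C
    revert c A B C; decide
  · obtain ⟨i, j, hij, hijs⟩ := Finset.card_eq_two.mp h
    simp only [hijs, Finset.prod_pair hij, Pi.add_apply, Pi.zero_apply]
    generalize coeff s p = c
    generalize x i = A; generalize y i = B; generalize z i = C
    generalize x j = A'; generalize y j = B'; generalize z j = C'
    revert c A B C A' B' C'; decide

variable {n : ℕ}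

lemma vadd_self (v : Fin n → ZMod 2) : v + v = 0 := by
  funext i
  have : ∀ t : ZMod 2, t + t = 0 := by decide
  exact this (v i)

lemma thirdDiff_fun {F : (Fin n → ZMod 2) → (Fin n → ZMod 2)} (hF : IsQuadratic F)
    (x y z : Fin n → ZMod 2) :
    F (x+y+z) + F (x+y) + F (x+z) + F (y+z) + F x + F y + F z + F 0 = 0 := by
  funext i
  obtain ⟨p, hp, hev⟩ := hF i
  simp only [Pi.add_apply, Pi.zero_apply, hev]
  exact thirdDiff_poly p hp x y z

variable (F : (Fin n → ZMod 2) → (Fin n → ZMod 2))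

/-- The derivative direction map. -/
def phi (a x : Fin n → ZMod 2) : Fin n → ZMod 2 := F x + F (x + a) + F 0 + F a

variable {F}

lemma phi_add (hF : IsQuadratic F) (a x y : Fin n → ZMod 2) :
    phi F a (x + y) = phi F a x + phi F a y := by
  have h := thirdDiff_fun hF x y a
  have h2 : ∀ v : Fin n → ZMod 2, v + v = 0 := vadd_self
  unfold phi
  linear_combination -h + h2 (F (x+y+a)) + h2 (F (x+y))

/-- φ as a linear map. -/
noncomputable def phiL (hF : IsQuadratic F) (a : Fin n → ZMod 2) :
    (Fin n → ZMod 2) →ₗ[ZMod 2] (Fin n → ZMod 2) where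
  toFun := phi F a
  map_add' := phi_add hF a
  map_smul' := by
    intro c x
    have h0 : phi F a 0 = 0 := by
      unfold phi
      rw [zero_add]
      linear_combination vadd_self (F 0) + vadd_self (F a)
    fin_cases c
    · show phi F a ((0 : ZMod 2) • x) = (0 : ZMod 2) • phi F a x
      rw [zero_smul, zero_smul]; exact h0
    · show phi F a ((1 : ZMod 2) • x) = (1 : ZMod 2) • phi F a x
      rw [one_smul, one_smul]

lemma phiL_self (hF : IsQuadratic F) (a : Fin n → ZMod 2) : phiL hF a a = 0 := by
  show phi F a a = 0
  unfold phi
  rw [vadd_self, add_comm (F a)]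
  linear_combination vadd_self (F 0 + F a)

lemma card_ker_transpose (f : (Fin n → ZMod 2) →ₗ[ZMod 2] (Fin n → ZMod 2)) :
    Nat.card (LinearMap.ker (LinearMap.toMatrix' f)ᵀ.mulVecLin) = Nat.card (LinearMap.ker f) := by
  set M := LinearMap.toMatrix' f with hM
  have hml : M.mulVecLin = f := by
    rw [← Matrix.toLin'_apply', hM, Matrix.toLin'_toMatrix']
  have h1 : M.rank + Module.finrank (ZMod 2) (LinearMap.ker M.mulVecLin) = n := by
    rw [Matrix.rank, LinearMap.finrank_range_add_finrank_ker]
    simp [Module.finrank_pi]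
  have h2 : Mᵀ.rank + Module.finrank (ZMod 2) (LinearMap.ker Mᵀ.mulVecLin) = n := by
    rw [Matrix.rank, LinearMap.finrank_range_add_finrank_ker]
    simp [Module.finrank_pi]
  rw [Matrix.rank_transpose] at h2
  have hfr : Module.finrank (ZMod 2) (LinearMap.ker Mᵀ.mulVecLin)
      = Module.finrank (ZMod 2) (LinearMap.ker f) := by rw [← hml]; omega
  have c1 : Nat.card (LinearMap.ker Mᵀ.mulVecLin)
      = 2 ^ Module.finrank (ZMod 2) (LinearMap.ker Mᵀ.mulVecLin) := by
    classical
    rw [Nat.card_eq_fintype_card, Module.card_eq_pow_finrank (K := ZMod 2), ZMod.card]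
  have c2 : Nat.card (LinearMap.ker f)
      = 2 ^ Module.finrank (ZMod 2) (LinearMap.ker f) := by
    classical
    rw [Nat.card_eq_fintype_card, Module.card_eq_pow_finrank (K := ZMod 2), ZMod.card]
  rw [c1, c2, hfr]

lemma mem_ker_transpose_iff (f : (Fin n → ZMod 2) →ₗ[ZMod 2] (Fin n → ZMod 2))
    (y : Fin n → ZMod 2) :
    y ∈ LinearMap.ker (LinearMap.toMatrix' f)ᵀ.mulVecLin ↔ ∀ x, y ⬝ᵥ f x = 0 := by
  set M := LinearMap.toMatrix' f with hM
  have hfx : ∀ x, f x = M *ᵥ x := by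
    intro x; rw [← Matrix.toLin'_apply, hM, Matrix.toLin'_toMatrix']
  rw [LinearMap.mem_ker, Matrix.mulVecLin_apply, Matrix.mulVec_transpose]
  constructor
  · intro h x
    rw [hfx, Matrix.dotProduct_mulVec, h, zero_dotProduct]
  · intro h
    funext i
    have := h (Pi.single i 1)
    rw [hfx, Matrix.dotProduct_mulVec, dotProduct_single, mul_one] at this
    exact this

lemma card_ker_filter (f : (Fin n → ZMod 2) →ₗ[ZMod 2] (Fin n → ZMod 2)) :
    Nat.card (LinearMap.ker f) = (Finset.univ.filter fun x => f x = 0).card := by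
  classical
  rw [Nat.card_eq_fintype_card, Fintype.card_subtype]
  congr 1
  ext x
  simp [LinearMap.mem_ker]

lemma fiber_card_le (f : (Fin n → ZMod 2) →ₗ[ZMod 2] (Fin n → ZMod 2))
    (c : Fin n → ZMod 2) :
    (Finset.univ.filter fun x => f x = c).card ≤ Nat.card (LinearMap.ker f) := by
  classical
  rw [card_ker_filter]
  rcases Finset.eq_empty_or_nonempty (Finset.univ.filter fun x => f x = c) with h | ⟨x0, hx0⟩
  · simp [h]
  · rw [Finset.mem_filter] at hx0
    apply Finset.card_le_card_of_injOn (fun x => x + x0)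
    · intro x hx
      simp only [Finset.mem_coe, Finset.mem_filter] at hx ⊢
      refine ⟨Finset.mem_univ _, ?_⟩
      rw [map_add, hx.2, hx0.2, vadd_self]
    · intro u _ v _ huv
      simpa using congrArg (fun w => w + x0) huv

lemma existsUnique_nonzero_iff (K : Submodule (ZMod 2) (Fin n → ZMod 2)) :
    (∃! y : Fin n → ZMod 2, y ≠ 0 ∧ y ∈ K) ↔ Nat.card K = 2 := by
  rw [Nat.card_eq_two_iff' (⟨0, K.zero_mem⟩ : K)]
  constructor
  · rintro ⟨y0, ⟨hy0, hy0K⟩, huni⟩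
    refine ⟨⟨y0, hy0K⟩, ?_, ?_⟩
    · simp [Subtype.ext_iff, hy0]
    · rintro ⟨z, hzK⟩ hz
      have hz0 : z ≠ 0 := by simpa [Subtype.ext_iff] using hz
      simp [Subtype.ext_iff, huni z ⟨hz0, hzK⟩]
  · rintro ⟨⟨y0, hy0K⟩, hy0, huni⟩
    have hy0ne : y0 ≠ 0 := by simpa [Subtype.ext_iff] using hy0
    refine ⟨y0, ⟨hy0ne, hy0K⟩, ?_⟩
    rintro z ⟨hz0, hzK⟩
    have := huni ⟨z, hzK⟩ (by simpa [Subtype.ext_iff] using hz0)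
    simpa [Subtype.ext_iff] using this

/-- the pointwise equivalence, for a single nonzero direction `a`. -/
lemma pointwise {F : (Fin n → ZMod 2) → (Fin n → ZMod 2)} (hF : IsQuadratic F)
    (a : Fin n → ZMod 2) (ha : a ≠ 0) :
    (∀ b, ddt F a b ≤ 2) ↔
      (∃! y : Fin n → ZMod 2, y ≠ 0 ∧ ∀ x, y ⬝ᵥ (F x + F (x + a) + F 0 + F a) = 0) := by
  classical
  set f := phiL hF a with hfdef
  have hfapp : ∀ x, f x = F x + F (x + a) + F 0 + F a := fun x => rfl
  have hiff : ∀ x b, (F (x + a) + F x = b) ↔ (f x = b + F 0 + F a) := by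
    intro x b
    rw [hfapp]
    constructor <;> intro h <;> linear_combination h
  have hddt : ∀ b, ddt F a b = (Finset.univ.filter fun x => f x = b + F 0 + F a).card := by
    intro b
    unfold ddt
    congr 1
    ext x
    simp only [Finset.mem_filter, Finset.mem_univ, true_and]
    exact hiff x b
  have hker2 : 2 ≤ Nat.card (LinearMap.ker f) := by
    have hmem : a ∈ LinearMap.ker f := LinearMap.mem_ker.mpr (phiL_self hF a)
    have hne : (⟨0, Submodule.zero_mem _⟩ : LinearMap.ker f) ≠ ⟨a, hmem⟩ := by
      simp [Subtype.ext_iff, Ne.symm ha]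
    rw [Nat.card_eq_fintype_card]
    exact Fintype.one_lt_card_iff.mpr ⟨_, _, hne⟩
  have step1 : (∀ b, ddt F a b ≤ 2) ↔ Nat.card (LinearMap.ker f) ≤ 2 := by
    constructor
    · intro h
      have hb := h (F 0 + F a)
      rw [hddt] at hb
      have h0 : F 0 + F a + F 0 + F a = 0 := by
        linear_combination vadd_self (F 0) + vadd_self (F a)
      rw [card_ker_filter]
      refine le_trans (le_of_eq ?_) hb
      congr 1
      ext x
      simp only [Finset.mem_filter, Finset.mem_univ, true_and]
      rw [h0]
    · intro h b
      rw [hddt]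
      exact le_trans (fiber_card_le f _) h
  have step2 : Nat.card (LinearMap.ker f) ≤ 2 ↔
      Nat.card (LinearMap.ker (LinearMap.toMatrix' f)ᵀ.mulVecLin) = 2 := by
    rw [card_ker_transpose]
    omega
  rw [step1, step2, ← existsUnique_nonzero_iff]
  constructor
  · rintro ⟨y, ⟨hy0, hyK⟩, huni⟩
    refine ⟨y, ⟨hy0, fun x => ?_⟩, ?_⟩
    · have := (mem_ker_transpose_iff f y).mp hyK x
      rwa [hfapp] at this
    · rintro z ⟨hz0, hz⟩
      refine huni z ⟨hz0, (mem_ker_transpose_iff f z).mpr fun x => ?_⟩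
      rw [hfapp]; exact hz x
  · rintro ⟨y, ⟨hy0, hy⟩, huni⟩
    refine ⟨y, ⟨hy0, (mem_ker_transpose_iff f y).mpr fun x => ?_⟩, ?_⟩
    · rw [hfapp]; exact hy x
    · rintro z ⟨hz0, hzK⟩
      refine huni z ⟨hz0, fun x => ?_⟩
      have := (mem_ker_transpose_iff f z).mp hzK x
      rwa [hfapp] at this

end APNaux

theorem apn_iff_unique_orthoDerivative {n : ℕ}
    (F : (Fin n → ZMod 2) → (Fin n → ZMod 2)) (hF : IsQuadratic F) :
    (∀ a : Fin n → ZMod 2, a ≠ 0 → ∀ b : Fin n → ZMod 2, ddt F a b ≤ 2) ↔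
      (∃! π : (Fin n → ZMod 2) → (Fin n → ZMod 2),
        π 0 = 0 ∧ (∀ x : Fin n → ZMod 2, x ≠ 0 → π x ≠ 0) ∧
        ∀ x a : Fin n → ZMod 2,
          dotProduct (π a) (F x + F (x + a) + F 0 + F a) = 0) := by
  classical
  constructor
  · intro hAPN
    have hQ : ∀ a : Fin n → ZMod 2, a ≠ 0 → ∃! y : Fin n → ZMod 2,
        y ≠ 0 ∧ ∀ x, y ⬝ᵥ (F x + F (x + a) + F 0 + F a) = 0 :=
      fun a ha => (APNaux.pointwise hF a ha).mp (hAPN a ha)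
    set π : (Fin n → ZMod 2) → (Fin n → ZMod 2) :=
      fun a => if h : a = 0 then 0 else Classical.choose (hQ a h).exists with hπdef
    have hspec : ∀ (a : Fin n → ZMod 2) (h : a ≠ 0),
        π a ≠ 0 ∧ ∀ x, π a ⬝ᵥ (F x + F (x + a) + F 0 + F a) = 0 := by
      intro a h
      have := Classical.choose_spec (hQ a h).exists
      simpa [hπdef, dif_neg h] using this
    refine ⟨π, ⟨by simp [hπdef], fun a ha => (hspec a ha).1, fun x a => ?_⟩, ?_⟩
    · by_cases h : a = 0
      · subst h; simp [hπdef, zero_dotProduct]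
      · exact (hspec a h).2 x
    · rintro π' ⟨h0', hnz', hP'⟩
      funext a
      by_cases h : a = 0
      · subst h; simp [hπdef, h0']
      · exact (hQ a h).unique ⟨hnz' a h, fun x => hP' x a⟩ (hspec a h)
  · rintro ⟨π, ⟨hπ0, hπnz, hπP⟩, huniq⟩ a ha b
    refine (APNaux.pointwise hF a ha).mpr ?_ b
    refine ⟨π a, ⟨hπnz a ha, fun x => hπP x a⟩, ?_⟩
    rintro y' ⟨hy'ne, hy'P⟩
    set π' : (Fin n → ZMod 2) → (Fin n → ZMod 2) := Function.update π a y' with hπ'def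
    have h1 : π' = π := by
      refine huniq π' ⟨?_, ?_, ?_⟩
      · rw [hπ'def, Function.update_of_ne (Ne.symm ha), hπ0]
      · intro x hx
        by_cases hxa : x = a
        · subst hxa; rw [hπ'def, Function.update_self]; exact hy'ne
        · rw [hπ'def, Function.update_of_ne hxa]; exact hπnz x hx
      · intro x a'
        by_cases ha' : a' = a
        · subst ha'; rw [hπ'def, Function.update_self]; exact hy'P x
        · rw [hπ'def, Function.update_of_ne ha']; exact hπP x a'
    have := congrFun h1 a
    rwa [hπ'def, Function.update_self] at this
end

section
/- Let F : F_2^n → F_2^n be a quadratic APN function with ortho-derivative π_F. Let A(x)=A_0 x + a and B(x)=B_0 x + b be affine permutations of F_2^n and C : F_2^n → F_2^n an affine map, and set G = A ∘ F ∘ B + C. Then G is a quadratic APN function and its ortho-derivative is π_G = (A_0^T)^{-1} ∘ π_F ∘ B_0. -/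
open Matrix

/-- Total degree bound for substitution of polynomials into a polynomial. -/
theorem totalDegree_aeval_le'' {σ τ R : Type*} [CommRing R] (f : σ → MvPolynomial τ R)
    (p : MvPolynomial σ R) (d e : ℕ) (hp : p.totalDegree ≤ d)
    (hf : ∀ j, (f j).totalDegree ≤ e) :
    (MvPolynomial.aeval f p).totalDegree ≤ d * e := by
  open MvPolynomial in
  conv_lhs => rw [p.as_sum]
  rw [map_sum]
  apply (MvPolynomial.totalDegree_finset_sum _ _).trans
  apply Finset.sup_le
  intro v hv
  rw [MvPolynomial.aeval_monomial]
  apply (MvPolynomial.totalDegree_mul _ _).trans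
  have h1 : (algebraMap R (MvPolynomial τ R) (MvPolynomial.coeff v p)).totalDegree = 0 :=
    MvPolynomial.totalDegree_C _
  rw [h1, zero_add, Finsupp.prod]
  apply (MvPolynomial.totalDegree_finset_prod _ _).trans
  calc ∑ i ∈ v.support, (f i ^ v i).totalDegree
      ≤ ∑ i ∈ v.support, v i * e := by
        apply Finset.sum_le_sum
        intro i _
        exact (MvPolynomial.totalDegree_pow _ _).trans (Nat.mul_le_mul_left _ (hf i))
    _ = (∑ i ∈ v.support, v i) * e := by rw [Finset.sum_mul]
    _ ≤ d * e := by
        apply Nat.mul_le_mul_right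
        exact le_trans (MvPolynomial.le_totalDegree hv) hp

/-- Evaluation commutes with polynomial substitution. -/
theorem eval_aeval'' {σ τ R : Type*} [CommSemiring R] (x : τ → R)
    (L : σ → MvPolynomial τ R) (p : MvPolynomial σ R) :
    MvPolynomial.eval x (MvPolynomial.aeval L p)
      = MvPolynomial.eval (fun j => MvPolynomial.eval x (L j)) p := by
  open MvPolynomial in
  have hC : ((eval x : MvPolynomial τ R →+* R).comp (C : R →+* MvPolynomial τ R))
      = RingHom.id R := RingHom.ext fun r => eval_C r
  rw [aeval_eq_bind₁, show (eval x : MvPolynomial τ R →+* R) (bind₁ L p) = _ from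
    hom_bind₁ _ _ _, hC]
  rfl

theorem orthoDerivative_of_EA_equivalent {n : ℕ}
    (F G : (Fin n → ZMod 2) → (Fin n → ZMod 2)) (hF : IsQuadratic F)
    (hAPN : ∀ a : Fin n → ZMod 2, a ≠ 0 → ∀ b : Fin n → ZMod 2, ddt F a b ≤ 2)
    (πF : (Fin n → ZMod 2) → (Fin n → ZMod 2))
    (hπ0 : πF 0 = 0) (hπne : ∀ x : Fin n → ZMod 2, x ≠ 0 → πF x ≠ 0)
    (hπ : ∀ x a : Fin n → ZMod 2,
      dotProduct (πF a) (F x + F (x + a) + F 0 + F a) = 0)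
    (A0 B0 : Matrix (Fin n) (Fin n) (ZMod 2)) (a b : Fin n → ZMod 2)
    (C0 : Matrix (Fin n) (Fin n) (ZMod 2)) (c : Fin n → ZMod 2)
    (hA0 : IsUnit A0.det) (hB0 : IsUnit B0.det)
    (hGeq : ∀ x, G x = A0.mulVec (F (B0.mulVec x + b)) + a + (C0.mulVec x + c)) :
    IsQuadratic G ∧
    (∀ α : Fin n → ZMod 2, α ≠ 0 → ∀ β : Fin n → ZMod 2, ddt G α β ≤ 2) ∧
    ((fun z => (A0ᵀ)⁻¹.mulVec (πF (B0.mulVec z))) 0 = 0) ∧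
    (∀ x : Fin n → ZMod 2, x ≠ 0 → (A0ᵀ)⁻¹.mulVec (πF (B0.mulVec x)) ≠ 0) ∧
    (∀ x α : Fin n → ZMod 2,
      dotProduct ((A0ᵀ)⁻¹.mulVec (πF (B0.mulVec α)))
        (G x + G (x + α) + G 0 + G α) = 0) := by
  classical
  have h20 : (2 : ZMod 2) = 0 := by decide
  have h40 : (4 : ZMod 2) = 0 := by decide
  -- injectivity of mulVec for invertible matrices
  have hB0inj : Function.Injective (B0.mulVec) := by
    intro u v huv
    have h := congrArg (B0⁻¹.mulVec) huv
    rwa [Matrix.mulVec_mulVec, Matrix.mulVec_mulVec, Matrix.nonsing_inv_mul _ hB0,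
      Matrix.one_mulVec, Matrix.one_mulVec] at h
  have hA0Tdet : IsUnit (A0ᵀ).det := by rwa [Matrix.det_transpose]
  have hATinj : Function.Injective ((A0ᵀ)⁻¹.mulVec) := by
    intro u v huv
    have h := congrArg (A0ᵀ.mulVec) huv
    rwa [Matrix.mulVec_mulVec, Matrix.mulVec_mulVec, Matrix.mul_nonsing_inv _ hA0Tdet,
      Matrix.one_mulVec, Matrix.one_mulVec] at h
  refine ⟨?_, ?_, ?_, ?_, ?_⟩
  · -- IsQuadratic G
    intro i
    choose p hpdeg hpval using hF
    set L : Fin n → MvPolynomial (Fin n) (ZMod 2) := fun j =>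
      (∑ k, MvPolynomial.C (B0 j k) * MvPolynomial.X k) + MvPolynomial.C (b j) with hLdef
    have hLdeg : ∀ j, (L j).totalDegree ≤ 1 := by
      intro j
      apply (MvPolynomial.totalDegree_add _ _).trans
      apply max_le
      · apply (MvPolynomial.totalDegree_finset_sum _ _).trans
        apply Finset.sup_le
        intro k _
        apply (MvPolynomial.totalDegree_mul _ _).trans
        rw [MvPolynomial.totalDegree_C, MvPolynomial.totalDegree_X]
      · rw [MvPolynomial.totalDegree_C]; exact Nat.zero_le 1
    have hLeval : ∀ x : Fin n → ZMod 2, (fun j => MvPolynomial.eval x (L j))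
        = B0.mulVec x + b := by
      intro x
      funext j
      simp [hLdef, Matrix.mulVec, dotProduct]
    refine ⟨(∑ j, MvPolynomial.C (A0 i j) * MvPolynomial.aeval L (p j))
      + ((∑ k, MvPolynomial.C (C0 i k) * MvPolynomial.X k)
        + MvPolynomial.C (a i + c i)), ?_, ?_⟩
    · apply (MvPolynomial.totalDegree_add _ _).trans
      apply max_le
      · apply (MvPolynomial.totalDegree_finset_sum _ _).trans
        apply Finset.sup_le
        intro j _
        apply (MvPolynomial.totalDegree_mul _ _).trans
        rw [MvPolynomial.totalDegree_C, zero_add]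
        have := totalDegree_aeval_le'' L (p j) 2 1 (hpdeg j) hLdeg
        simpa using this
      · apply (MvPolynomial.totalDegree_add _ _).trans
        apply max_le
        · apply (MvPolynomial.totalDegree_finset_sum _ _).trans
          apply Finset.sup_le
          intro k _
          apply (MvPolynomial.totalDegree_mul _ _).trans
          rw [MvPolynomial.totalDegree_C, MvPolynomial.totalDegree_X]
          exact one_le_two
        · rw [MvPolynomial.totalDegree_C]; exact Nat.zero_le 2
    · intro x
      have heval : ∀ j, MvPolynomial.eval x (MvPolynomial.aeval L (p j))
          = F (B0.mulVec x + b) j := by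
        intro j
        rw [eval_aeval'', hLeval, ← hpval]
      rw [hGeq]
      simp only [map_add, map_sum, MvPolynomial.eval_mul, MvPolynomial.eval_C,
        MvPolynomial.eval_X, heval, Pi.add_apply]
      simp [Matrix.mulVec, dotProduct]
      ring
  · -- APN
    intro α hα β
    have hα' : B0.mulVec α ≠ 0 := by
      intro h
      exact hα (hB0inj (h.trans (Matrix.mulVec_zero B0).symm))
    have hle : ddt G α β ≤ ddt F (B0.mulVec α) (A0⁻¹.mulVec (β + C0.mulVec α)) := by
      unfold ddt
      apply Finset.card_le_card_of_injOn (fun x => B0.mulVec x + b)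
      · intro x hx
        simp only [Finset.coe_filter, Set.mem_setOf_eq, Finset.mem_univ, true_and] at hx ⊢
        have harg : B0.mulVec (x + α) + b = B0.mulVec x + b + B0.mulVec α := by
          rw [Matrix.mulVec_add]; ring
        rw [hGeq, hGeq, harg, Matrix.mulVec_add C0] at hx
        have key : A0.mulVec (F (B0.mulVec x + b + B0.mulVec α) + F (B0.mulVec x + b))
            = β + C0.mulVec α := by
          rw [← hx]
          simp only [Matrix.mulVec_add]
          funext i
          simp only [Pi.add_apply]
          ring_nf
          simp [h20, h40]
        have := congrArg (A0⁻¹.mulVec) key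
        rwa [Matrix.mulVec_mulVec, Matrix.nonsing_inv_mul _ hA0, Matrix.one_mulVec] at this
      · intro u _ v _ h
        exact hB0inj (by simpa using h)
    exact hle.trans (hAPN _ hα' _)
  · -- πG 0 = 0
    show (A0ᵀ)⁻¹.mulVec (πF (B0.mulVec 0)) = 0
    rw [Matrix.mulVec_zero, hπ0, Matrix.mulVec_zero]
  · -- πG x ≠ 0
    intro x hx h
    have hBx : B0.mulVec x ≠ 0 := by
      intro h'
      exact hx (hB0inj (h'.trans (Matrix.mulVec_zero B0).symm))
    apply hπne _ hBx
    have : (A0ᵀ)⁻¹.mulVec (πF (B0.mulVec x)) = (A0ᵀ)⁻¹.mulVec 0 := by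
      rw [h, Matrix.mulVec_zero]
    exact hATinj this
  · -- orthogonality
    intro x α
    set α' := B0.mulVec α with hα'def
    set y := B0.mulVec x + b with hydef
    have harg2 : B0.mulVec (x + α) + b = y + α' := by
      rw [Matrix.mulVec_add]; rw [hydef, hα'def]; ring
    have harg3 : B0.mulVec (0 : Fin n → ZMod 2) + b = b := by
      rw [Matrix.mulVec_zero, zero_add]
    have harg4 : B0.mulVec α + b = b + α' := by rw [hα'def]; ring
    have hsum : G x + G (x + α) + G 0 + G α
        = A0.mulVec (F y + F (y + α') + F b + F (b + α')) := by
      rw [hGeq, hGeq, hGeq, hGeq, harg2, harg3, harg4, ← hydef]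
      simp only [Matrix.mulVec_add, Matrix.mulVec_zero]
      funext i
      simp only [Pi.add_apply, Pi.zero_apply]
      ring_nf
      simp [h20, h40]
    rw [hsum]
    have hdot : ∀ u w : Fin n → ZMod 2,
        dotProduct ((A0ᵀ)⁻¹.mulVec u) (A0.mulVec w) = dotProduct u w := by
      intro u w
      rw [Matrix.dotProduct_mulVec, ← Matrix.mulVec_transpose, Matrix.mulVec_mulVec,
        Matrix.mul_nonsing_inv _ hA0Tdet, Matrix.one_mulVec]
    rw [hdot]
    have hsplit : F y + F (y + α') + F b + F (b + α')
        = (F y + F (y + α') + F 0 + F α') + (F b + F (b + α') + F 0 + F α') := by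
      funext i
      simp only [Pi.add_apply]
      ring_nf
      simp [h20, h40]
    rw [hsplit, dotProduct_add, hπ y α', hπ b α', add_zero]
end

section
/- Let M, N ∈ F_2^{m×n} be matrices of the same rank r. Then the solution space of the linear system X·M = N·Y in unknowns (X,Y) ∈ F_2^{m×m} × F_2^{n×n} is a linear subspace of dimension at least m²+n² − r(m+n−r); equivalently, the system has rank at most r(m+n−r). -/
open Matrix

noncomputable section SolSpaceAux

open Module LinearMap

variable {K : Type*} [Field K]

private lemma aux_finrank_range_compLeft {V W : Type*} [AddCommGroup V] [Module K V]
    [AddCommGroup W] [Module K W] [FiniteDimensional K W]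
    (f : V →ₗ[K] W) (ι : Type*) [Fintype ι] :
    Module.finrank K (LinearMap.range (f.compLeft ι))
      = Fintype.card ι * Module.finrank K (LinearMap.range f) := by
  have hinj : Function.Injective ((LinearMap.range f).subtype.compLeft ι) := by
    intro g g' h
    funext i
    exact Subtype.ext (congrFun h i)
  have hrange : LinearMap.range (f.compLeft ι)
      = LinearMap.range ((LinearMap.range f).subtype.compLeft ι) := by
    ext x
    constructor
    · rintro ⟨v, rfl⟩
      exact ⟨fun i => ⟨f (v i), LinearMap.mem_range_self _ _⟩, rfl⟩
    · rintro ⟨g, rfl⟩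
      exact ⟨fun i => (LinearMap.mem_range.mp (g i).2).choose,
        funext fun i => (LinearMap.mem_range.mp (g i).2).choose_spec⟩
  rw [hrange, ← (LinearEquiv.ofInjective _ hinj).finrank_eq,
    Module.finrank_pi_fintype]
  simp [Finset.sum_const, Finset.card_univ, smul_eq_mul]

private def mulRightLin (k : ℕ) {p q : ℕ} (A : Matrix (Fin p) (Fin q) K) :
    Matrix (Fin k) (Fin p) K →ₗ[K] Matrix (Fin k) (Fin q) K where
  toFun X := X * A
  map_add' X Y := Matrix.add_mul X Y A
  map_smul' c X := by simp [Matrix.smul_mul]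

private def mulLeftLin {p q : ℕ} (A : Matrix (Fin p) (Fin q) K) (k : ℕ) :
    Matrix (Fin q) (Fin k) K →ₗ[K] Matrix (Fin p) (Fin k) K where
  toFun Y := A * Y
  map_add' X Y := Matrix.mul_add A X Y
  map_smul' c X := by simp [Matrix.mul_smul]

private lemma finrank_range_mulRightLin (k : ℕ) {p q : ℕ} (A : Matrix (Fin p) (Fin q) K) :
    Module.finrank K (LinearMap.range (mulRightLin k A)) = k * A.rank := by
  have h : (mulRightLin k A) = LinearMap.compLeft (Aᵀ.mulVecLin) (Fin k) := by
    refine LinearMap.ext fun X => funext fun i => funext fun j => ?_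
    show (X * A) i j = Aᵀ.mulVecLin (X i) j
    simp [Matrix.mul_apply, Matrix.mulVecLin_apply, Matrix.mulVec, Matrix.vecMul,
      dotProduct, Matrix.transpose_apply, mul_comm]
  have h2 : Module.finrank K (LinearMap.range (mulRightLin k A))
      = Fintype.card (Fin k) * Module.finrank K (LinearMap.range Aᵀ.mulVecLin) := by
    rw [h]; exact aux_finrank_range_compLeft _ _
  rw [h2, Fintype.card_fin, ← Matrix.rank_transpose A]
  rfl

private lemma finrank_range_mulLeftLin {p q : ℕ} (A : Matrix (Fin p) (Fin q) K) (k : ℕ) :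
    Module.finrank K (LinearMap.range (mulLeftLin A k)) = k * A.rank := by
  have h : LinearMap.range (mulLeftLin A k)
      = Submodule.map (Matrix.transposeLinearEquiv (Fin k) (Fin p) K K : Matrix (Fin k) (Fin p) K →ₗ[K] Matrix (Fin p) (Fin k) K)
        (LinearMap.range (mulRightLin k Aᵀ)) := by
    ext x
    constructor
    · rintro ⟨Y, rfl⟩
      exact ⟨Yᵀ * Aᵀ, ⟨Yᵀ, rfl⟩, by simp [mulLeftLin, Matrix.transpose_mul]⟩
    · rintro ⟨w, ⟨Z, rfl⟩, rfl⟩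
      exact ⟨Zᵀ, by simp [mulLeftLin, mulRightLin, Matrix.transpose_mul]⟩
  rw [h, LinearEquiv.finrank_map_eq, finrank_range_mulRightLin, Matrix.rank_transpose]

end SolSpaceAux

set_option maxHeartbeats 2000000 in
private theorem solution_space_dimension_lower_bound_aux {m n : ℕ}
    (M N : Matrix (Fin m) (Fin n) (ZMod 2)) (r : ℕ)
    (hM : M.rank = r) (hN : N.rank = r) :
    ∃ W : Submodule (ZMod 2)
        (Matrix (Fin m) (Fin m) (ZMod 2) × Matrix (Fin n) (Fin n) (ZMod 2)),
      (W : Set (Matrix (Fin m) (Fin m) (ZMod 2) × Matrix (Fin n) (Fin n) (ZMod 2)))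
          = {p | p.1 * M = N * p.2} ∧
      m ^ 2 + n ^ 2 - r * (m + n - r) ≤ Module.finrank (ZMod 2) W := by
  classical
  -- the linear map whose kernel is the solution space
  set L : (Matrix (Fin m) (Fin m) (ZMod 2) × Matrix (Fin n) (Fin n) (ZMod 2)) →ₗ[ZMod 2]
      Matrix (Fin m) (Fin n) (ZMod 2) :=
    (mulRightLin m M).comp (LinearMap.fst (ZMod 2) _ _)
      - (mulLeftLin N n).comp (LinearMap.snd (ZMod 2) _ _) with hL
  refine ⟨LinearMap.ker L, ?_, ?_⟩
  · ext p
    simp only [SetLike.mem_coe, LinearMap.mem_ker, hL, LinearMap.sub_apply,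
      LinearMap.comp_apply, LinearMap.fst_apply, LinearMap.snd_apply, Set.mem_setOf_eq,
      sub_eq_zero]
    exact Iff.rfl
  · -- dimension count
    have hrm : r ≤ m := by rw [← hM]; simpa using M.rank_le_card_height
    have hrn : r ≤ n := by rw [← hM]; simpa using M.rank_le_card_width
    have e1 : Module.finrank (ZMod 2) (LinearMap.range L)
        + Module.finrank (ZMod 2) (LinearMap.ker L) = m ^ 2 + n ^ 2 := by
      rw [LinearMap.finrank_range_add_finrank_ker]
      simp only [Module.finrank_prod, Module.finrank_matrix, Fintype.card_fin,
        Module.finrank_self]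
      ring
    set SM := LinearMap.range (mulRightLin m M) with hSM
    set SN := LinearMap.range (mulLeftLin N n) with hSN
    have hsub : LinearMap.range L ≤ SM ⊔ SN := by
      rintro x ⟨⟨X, Y⟩, rfl⟩
      have hx : L (X, Y) = mulRightLin m M X - mulLeftLin N n Y := rfl
      rw [hx]
      exact Submodule.sub_mem _
        (Submodule.mem_sup_left (LinearMap.mem_range_self _ _))
        (Submodule.mem_sup_right (LinearMap.mem_range_self _ _))
    have e2 : Module.finrank (ZMod 2) (SM ⊔ SN : Submodule (ZMod 2) _)
        + Module.finrank (ZMod 2) (SM ⊓ SN : Submodule (ZMod 2) _) = m * r + n * r := by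
      rw [Submodule.finrank_sup_add_finrank_inf_eq, hSM, hSN, finrank_range_mulRightLin,
        finrank_range_mulLeftLin, hM, hN]
    -- lower bound on the intersection
    set hmap : Matrix (Fin n) (Fin m) (ZMod 2) →ₗ[ZMod 2] Matrix (Fin m) (Fin n) (ZMod 2) :=
      (mulLeftLin N n).comp (mulRightLin n M) with hhmap
    have hmapM : LinearMap.range hmap ≤ SM := by
      rintro x ⟨Z, rfl⟩
      refine ⟨N * Z, ?_⟩
      show (N * Z) * M = N * (Z * M)
      rw [Matrix.mul_assoc]
    have hmapN : LinearMap.range hmap ≤ SN := by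
      rintro x ⟨Z, rfl⟩
      exact ⟨Z * M, rfl⟩
    -- independent family of outer products inside `range hmap`
    set C := LinearMap.range N.mulVecLin with hCdef
    set R' := LinearMap.range Mᵀ.mulVecLin with hRdef
    have hC : Module.finrank (ZMod 2) C = r := by rw [← hN]; rfl
    have hR : Module.finrank (ZMod 2) R' = r := by rw [← hM, ← Matrix.rank_transpose]; rfl
    let bu : Module.Basis (Fin r) (ZMod 2) C := (Module.finBasis (ZMod 2) C).reindex (finCongr hC)
    let bv : Module.Basis (Fin r) (ZMod 2) R' := (Module.finBasis (ZMod 2) R').reindex (finCongr hR)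
    set u : Fin r → (Fin m → ZMod 2) := fun i => (bu i : Fin m → ZMod 2) with hu_def
    set v : Fin r → (Fin n → ZMod 2) := fun i => (bv i : Fin n → ZMod 2) with hv_def
    have hu : LinearIndependent (ZMod 2) u :=
      bu.linearIndependent.map' C.subtype C.ker_subtype
    have hv : LinearIndependent (ZMod 2) v :=
      bv.linearIndependent.map' R'.subtype R'.ker_subtype
    set w : Fin r × Fin r → Matrix (Fin m) (Fin n) (ZMod 2) :=
      fun p => vecMulVec (u p.1) (v p.2) with hw_def
    have hwmem : ∀ p, w p ∈ LinearMap.range hmap := by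
      rintro ⟨i, j⟩
      obtain ⟨a, ha⟩ := LinearMap.mem_range.mp (bu i).2
      obtain ⟨b, hb⟩ := LinearMap.mem_range.mp (bv j).2
      refine ⟨vecMulVec a b, ?_⟩
      have h0 : hmap (vecMulVec a b) = N * (vecMulVec a b * M) := rfl
      rw [h0]
      have key : N * (vecMulVec a b * M) = vecMulVec (N *ᵥ a) (b ᵥ* M) := by
        ext i' j'
        simp only [Matrix.mul_apply, Matrix.vecMulVec_apply, Matrix.mulVec,
          Matrix.vecMul, dotProduct, Matrix.transpose_apply]
        rw [Finset.sum_mul_sum]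
        refine Finset.sum_congr rfl fun t _ => ?_
        rw [Finset.mul_sum]
        refine Finset.sum_congr rfl fun s _ => by ring
      rw [key]
      simp only [hw_def, hu_def, hv_def]
      rw [show N *ᵥ a = (bu i : Fin m → ZMod 2) from by
            simpa [Matrix.mulVecLin_apply] using ha,
        show b ᵥ* M = (bv j : Fin n → ZMod 2) from by
            simpa [Matrix.mulVecLin_apply] using hb]
    have hw : LinearIndependent (ZMod 2) w := by
      rw [Fintype.linearIndependent_iff]
      intro c hc
      have hc' : ∀ (a : Fin m) (b : Fin n),
          ∑ p : Fin r × Fin r, c p * (u p.1 a * v p.2 b) = 0 := by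
        intro a b
        have h3 := congrFun (congrFun hc a) b
        simpa [hw_def, Matrix.vecMulVec_apply, Matrix.sum_apply, Matrix.smul_apply,
          smul_eq_mul, Matrix.zero_apply, mul_assoc] using h3
      have h1 : ∀ (a : Fin m) (j : Fin r), (∑ i, c (i, j) * u i a) = 0 := by
        intro a j
        refine Fintype.linearIndependent_iff.mp hv (fun j => ∑ i, c (i, j) * u i a) ?_ j
        funext b
        simp only [Finset.sum_apply, Pi.smul_apply, smul_eq_mul, Pi.zero_apply,
          Finset.sum_mul]
        rw [Finset.sum_comm]
        have h2 := hc' a b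
        rw [Fintype.sum_prod_type] at h2
        simpa [mul_assoc] using h2
      rintro ⟨i, j⟩
      refine Fintype.linearIndependent_iff.mp hu (fun i => c (i, j)) ?_ i
      funext a
      simp only [Finset.sum_apply, Pi.smul_apply, smul_eq_mul, Pi.zero_apply]
      exact h1 a j
    have hspan : Submodule.span (ZMod 2) (Set.range w) ≤ LinearMap.range hmap :=
      Submodule.span_le.mpr (by rintro _ ⟨p, rfl⟩; exact hwmem p)
    have hr2 : r * r ≤ Module.finrank (ZMod 2) (SM ⊓ SN : Submodule (ZMod 2) _) := by
      calc r * r = Module.finrank (ZMod 2) (Submodule.span (ZMod 2) (Set.range w)) := by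
            rw [finrank_span_eq_card hw]; simp
        _ ≤ Module.finrank (ZMod 2) (LinearMap.range hmap) := Submodule.finrank_mono hspan
        _ ≤ _ := Submodule.finrank_mono (le_inf hmapM hmapN)
    have hL_le : Module.finrank (ZMod 2) (LinearMap.range L)
        ≤ Module.finrank (ZMod 2) (SM ⊔ SN : Submodule (ZMod 2) _) :=
      Submodule.finrank_mono hsub
    have hx : r * (m + n - r) + r * r = m * r + n * r := by
      obtain ⟨d, rfl⟩ : ∃ d, n = r + d := ⟨n - r, (Nat.add_sub_cancel' hrn).symm⟩
      have h' : m + (r + d) - r = m + d := by omega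
      rw [h']; ring
    have ha : Module.finrank (ZMod 2) (LinearMap.range L) ≤ r * (m + n - r) := by
      have h4 := add_le_add hL_le hr2
      rw [e2] at h4
      omega
    rw [tsub_le_iff_right]
    linarith [e1, ha]

theorem solution_space_dimension_lower_bound {m n : ℕ}
    (M N : Matrix (Fin m) (Fin n) (ZMod 2)) (r : ℕ)
    (hM : M.rank = r) (hN : N.rank = r) :
    ∃ W : Submodule (ZMod 2)
        (Matrix (Fin m) (Fin m) (ZMod 2) × Matrix (Fin n) (Fin n) (ZMod 2)),
      (W : Set (Matrix (Fin m) (Fin m) (ZMod 2) × Matrix (Fin n) (Fin n) (ZMod 2)))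
          = {p | p.1 * M = N * p.2} ∧
      m ^ 2 + n ^ 2 - r * (m + n - r) ≤ Module.finrank (ZMod 2) W :=
  solution_space_dimension_lower_bound_aux M N r hM hN
end

section
/- Let F : F_2^n → F_2^m be a quadratic function. Then the differential spectrum of F takes only the two values 0 and δ(F) (i.e., δ_F(a,b) ∈ {0, δ(F)} for all nonzero a and all b) if and only if all matrices Jlin_F(x), for nonzero x ∈ F_2^n, have the same rank. -/
open Matrix

/-- Differential uniformity δ(F): maximum of δ_F(a,b) over nonzero a and all b. -/
def deltaUniformity {n m : ℕ} (F : (Fin n → ZMod 2) → (Fin m → ZMod 2)) : ℕ :=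
  Finset.univ.sup fun p : (Fin n → ZMod 2) × (Fin m → ZMod 2) =>
    if p.1 = 0 then 0 else ddt F p.1 p.2

-- auxiliary

lemma zmod2_pow_idem (a : ZMod 2) {k : ℕ} (hk : k ≠ 0) : a ^ k = a := by
  have hsq : ∀ b : ZMod 2, b * b = b := by decide
  obtain ⟨k, rfl⟩ := Nat.exists_eq_succ_of_ne_zero hk
  clear hk
  induction k with
  | zero => exact pow_one a
  | succ k ih => rw [pow_succ, ih, hsq]

lemma third_diff {n : ℕ} (p : MvPolynomial (Fin n) (ZMod 2)) (hp : p.totalDegree ≤ 2)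
    (x y z : Fin n → ZMod 2) :
    MvPolynomial.eval (x + y + z) p + MvPolynomial.eval (x + y) p
      + MvPolynomial.eval (x + z) p + MvPolynomial.eval (y + z) p
      + MvPolynomial.eval x p + MvPolynomial.eval y p + MvPolynomial.eval z p
      + MvPolynomial.eval 0 p = 0 := by
  conv_lhs => rw [p.as_sum]
  simp only [map_sum, ← Finset.sum_add_distrib]
  apply Finset.sum_eq_zero
  intro d hd
  have hdeg : (d.sum fun _ e => e) ≤ 2 := le_trans (MvPolynomial.le_totalDegree hd) hp
  simp only [MvPolynomial.eval_monomial, ← mul_add]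
  rw [mul_eq_zero]
  right
  -- the Finsupp.prod of powers equals the product of variables
  have key : ∀ v : Fin n → ZMod 2, (d.prod fun i k => v i ^ k) = ∏ i ∈ d.support, v i := by
    intro v
    rw [Finsupp.prod]
    exact Finset.prod_congr rfl fun i hi =>
      zmod2_pow_idem _ (Finsupp.mem_support_iff.mp hi)
  simp only [key]
  have hcard : d.support.card ≤ 2 := by
    calc d.support.card = ∑ i ∈ d.support, 1 := by simp
    _ ≤ ∑ i ∈ d.support, d i := Finset.sum_le_sum fun i hi =>
        Nat.one_le_iff_ne_zero.mpr (Finsupp.mem_support_iff.mp hi)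
    _ ≤ 2 := hdeg
  interval_cases h : d.support.card
  · rw [Finset.card_eq_zero] at h
    simp [h]
    decide
  · obtain ⟨i, hi⟩ := Finset.card_eq_one.mp h
    simp only [hi, Finset.prod_singleton, Pi.add_apply, Pi.zero_apply]
    generalize x i = a; generalize y i = b; generalize z i = c
    revert a b c; decide
  · obtain ⟨i, j, hij, hs⟩ := Finset.card_eq_two.mp h
    simp only [hs, Finset.prod_pair hij, Pi.add_apply, Pi.zero_apply]
    generalize x i = a1; generalize x j = a2
    generalize y i = b1; generalize y j = b2
    generalize z i = c1; generalize z j = c2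
    revert a1 a2 b1 b2 c1 c2; decide

variable {n m : ℕ}

/-- The bilinear-ish map `B(a,x) = F(a+x)+F a+F x+F 0`. -/
def Bf (F : (Fin n → ZMod 2) → (Fin m → ZMod 2)) (a x : Fin n → ZMod 2) :
    Fin m → ZMod 2 :=
  F (a + x) + F a + F x + F 0

lemma Bf_add_right {F : (Fin n → ZMod 2) → (Fin m → ZMod 2)} (hF : IsQuadratic F)
    (a x y : Fin n → ZMod 2) : Bf F a (x + y) = Bf F a x + Bf F a y := by
  funext i
  obtain ⟨p, hp, hpe⟩ := hF i
  have h3 := third_diff p hp a x y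
  simp only [Bf, Pi.add_apply, hpe]
  rw [show a + (x + y) = a + x + y by ring] at *
  rw [show a + x + y = a + x + y from rfl]
  generalize MvPolynomial.eval (a + x + y) p = v1 at *
  generalize MvPolynomial.eval (a + x) p = v2 at *
  generalize MvPolynomial.eval (a + y) p = v3 at *
  generalize MvPolynomial.eval (x + y) p = v4 at *
  generalize MvPolynomial.eval a p = v5 at *
  generalize MvPolynomial.eval x p = v6 at *
  generalize MvPolynomial.eval y p = v7 at *
  generalize MvPolynomial.eval (0 : Fin n → ZMod 2) p = v8 at *
  revert h3; revert v1 v2 v3 v4 v5 v6 v7 v8; decide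

lemma Bf_zero_right (F : (Fin n → ZMod 2) → (Fin m → ZMod 2)) (a : Fin n → ZMod 2) :
    Bf F a 0 = 0 := by
  funext i
  simp only [Bf, add_zero, Pi.add_apply, Pi.zero_apply]
  generalize F a i = u; generalize F 0 i = v
  revert u v; decide

/-- `B(a, ·)` as an additive monoid hom. -/
def BfHom {F : (Fin n → ZMod 2) → (Fin m → ZMod 2)} (hF : IsQuadratic F)
    (a : Fin n → ZMod 2) : (Fin n → ZMod 2) →+ (Fin m → ZMod 2) where
  toFun := Bf F a
  map_zero' := Bf_zero_right F a
  map_add' := Bf_add_right hF a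

lemma Bf_eq_mulVec {F : (Fin n → ZMod 2) → (Fin m → ZMod 2)} (hF : IsQuadratic F)
    (a x : Fin n → ZMod 2) : Bf F a x = (Jlin F a) *ᵥ x := by
  have h : ((BfHom hF a).toZModLinearMap 2 : (Fin n → ZMod 2) →ₗ[ZMod 2] (Fin m → ZMod 2))
      = (Jlin F a).mulVecLin := by
    apply Module.Basis.ext (Pi.basisFun (ZMod 2) (Fin n))
    intro j
    simp only [Pi.basisFun_apply, Matrix.mulVecLin_apply, Matrix.mulVec_single_one]
    show Bf F a (Pi.single j 1) = _
    funext i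
    simp [Bf, Jlin, Matrix.transpose_apply]
  have := LinearMap.congr_fun h x
  simp at this
  exact this

lemma derivLin {F : (Fin n → ZMod 2) → (Fin m → ZMod 2)} (hF : IsQuadratic F)
    (a x : Fin n → ZMod 2) : F (x + a) + F x = (Jlin F a) *ᵥ x + (F a + F 0) := by
  have h := Bf_eq_mulVec hF a x
  funext i
  have := congrFun h i
  simp only [Bf, Pi.add_apply] at this ⊢
  rw [show a + x = x + a by ring] at this
  generalize F (x + a) i = u at *
  generalize F x i = v at *
  generalize F a i = w at *
  generalize F 0 i = u0 at *
  generalize ((Jlin F a) *ᵥ x) i = s at *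
  revert this; revert u v w u0 s; decide

lemma card_ker (M : Matrix (Fin m) (Fin n) (ZMod 2)) :
    (Finset.univ.filter fun x : Fin n → ZMod 2 => M *ᵥ x = 0).card = 2 ^ (n - M.rank) := by
  haveI : Fintype (LinearMap.ker M.mulVecLin) := Fintype.ofFinite _
  have h1 : (Finset.univ.filter fun x : Fin n → ZMod 2 => M *ᵥ x = 0).card
      = Fintype.card (LinearMap.ker M.mulVecLin) := by
    refine (Fintype.card_of_subtype _ fun x => ?_).symm
    simp [LinearMap.mem_ker]
  rw [h1, Module.card_eq_pow_finrank (K := ZMod 2), ZMod.card]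
  congr 1
  have h2 := LinearMap.finrank_range_add_finrank_ker M.mulVecLin
  rw [Module.finrank_pi] at h2
  simp only [Fintype.card_fin] at h2
  have : M.rank = Module.finrank (ZMod 2) (LinearMap.range M.mulVecLin) := rfl
  omega

lemma card_sol (M : Matrix (Fin m) (Fin n) (ZMod 2)) (c : Fin m → ZMod 2)
    (x0 : Fin n → ZMod 2) (hx0 : M *ᵥ x0 = c) :
    (Finset.univ.filter fun x : Fin n → ZMod 2 => M *ᵥ x = c).card = 2 ^ (n - M.rank) := by
  rw [← card_ker M]
  apply Finset.card_bij (fun x _ => x + x0)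
  · intro x hx
    simp only [Finset.mem_filter, Finset.mem_univ, true_and] at hx ⊢
    rw [Matrix.mulVec_add, hx, hx0]
    funext i; simp only [Pi.add_apply, Pi.zero_apply]
    generalize c i = u; revert u; decide
  · intro x hx y hy hxy
    have := congrArg (fun v => v + x0) hxy
    simpa using this
  · intro y hy
    refine ⟨y + x0, ?_, ?_⟩
    · simp only [Finset.mem_filter, Finset.mem_univ, true_and] at hy ⊢
      rw [Matrix.mulVec_add, hy, hx0]
      funext i; simp only [Pi.add_apply, Pi.zero_apply]
      generalize c i = u; revert u; decide
    · funext i; simp only [Pi.add_apply]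
      generalize y i = u; generalize x0 i = v; revert u v; decide

lemma ddt_eq {F : (Fin n → ZMod 2) → (Fin m → ZMod 2)} (hF : IsQuadratic F)
    (a : Fin n → ZMod 2) (b : Fin m → ZMod 2) :
    ddt F a b = 0 ∨ ddt F a b = 2 ^ (n - (Jlin F a).rank) := by
  rw [ddt]
  by_cases h : ∃ x0, F (x0 + a) + F x0 = b
  · right
    obtain ⟨x0, hx0⟩ := h
    have key : ∀ x, (F (x + a) + F x = b) ↔ ((Jlin F a) *ᵥ x = b + (F a + F 0)) := by
      intro x
      rw [derivLin hF a x]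
      constructor
      · intro he
        funext i
        have := congrFun he i
        simp only [Pi.add_apply] at this ⊢
        generalize ((Jlin F a) *ᵥ x) i = s at *
        generalize F a i = u at *; generalize F 0 i = v at *; generalize b i = w at *
        revert this; revert s u v w; decide
      · intro he
        funext i
        have := congrFun he i
        simp only [Pi.add_apply] at this ⊢
        generalize ((Jlin F a) *ᵥ x) i = s at *
        generalize F a i = u at *; generalize F 0 i = v at *; generalize b i = w at *
        revert this; revert s u v w; decide
    simp only [key]
    exact card_sol _ _ x0 ((key x0).mp hx0)
  · left
    rw [Finset.card_eq_zero]
    push_neg at h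
    exact Finset.filter_eq_empty_iff.mpr fun x _ => h x

lemma ddt_attained {F : (Fin n → ZMod 2) → (Fin m → ZMod 2)} (hF : IsQuadratic F)
    (a : Fin n → ZMod 2) :
    ddt F a (F a + F 0) = 2 ^ (n - (Jlin F a).rank) := by
  rcases ddt_eq hF a (F a + F 0) with h | h
  · exfalso
    rw [ddt, Finset.card_eq_zero] at h
    have : (0 : Fin n → ZMod 2) ∈ (Finset.univ.filter
        fun x : Fin n → ZMod 2 => F (x + a) + F x = F a + F 0) := by
      simp only [Finset.mem_filter, Finset.mem_univ, true_and, zero_add]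
    rw [h] at this
    exact absurd this (Finset.notMem_empty _)
  · exact h

theorem two_valued_spectrum_iff_constant_rank {n m : ℕ}
    (F : (Fin n → ZMod 2) → (Fin m → ZMod 2)) (hF : IsQuadratic F) :
    (∀ a : Fin n → ZMod 2, a ≠ 0 → ∀ b : Fin m → ZMod 2,
        ddt F a b = 0 ∨ ddt F a b = deltaUniformity F) ↔
      (∀ x : Fin n → ZMod 2, x ≠ 0 → ∀ y : Fin n → ZMod 2, y ≠ 0 →
        (Jlin F x).rank = (Jlin F y).rank) := by
  constructor
  · intro h x hx y hy
    have hxd := h x hx (F x + F 0)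
    have hyd := h y hy (F y + F 0)
    rw [ddt_attained hF] at hxd hyd
    have hx2 : (2:ℕ) ^ (n - (Jlin F x).rank) ≠ 0 := by positivity
    have hy2 : (2:ℕ) ^ (n - (Jlin F y).rank) ≠ 0 := by positivity
    rcases hxd with h1 | h1
    · exact absurd h1 hx2
    rcases hyd with h2 | h2
    · exact absurd h2 hy2
    have he : (2:ℕ) ^ (n - (Jlin F x).rank) = 2 ^ (n - (Jlin F y).rank) := h1.trans h2.symm
    have := Nat.pow_right_injective (le_refl 2) he
    have hrx : (Jlin F x).rank ≤ n := (Jlin F x).rank_le_width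
    have hry : (Jlin F y).rank ≤ n := (Jlin F y).rank_le_width
    omega
  · intro h a ha b
    rcases ddt_eq hF a b with h0 | h1
    · left; exact h0
    · right
      rw [h1]
      -- show 2 ^ (n - rank) = deltaUniformity
      apply le_antisymm
      · have := Finset.le_sup (f := fun p : (Fin n → ZMod 2) × (Fin m → ZMod 2) =>
            if p.1 = 0 then 0 else ddt F p.1 p.2)
            (Finset.mem_univ (a, F a + F 0))
        rw [deltaUniformity]
        simpa [ha, ddt_attained hF a] using this
      · rw [deltaUniformity]
        apply Finset.sup_le
        intro p _
        by_cases hp : p.1 = 0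
        · simp [hp]
        · simp only [hp, if_false]
          rcases ddt_eq hF p.1 p.2 with h2 | h2
          · simp [h2]
          · rw [h2, h p.1 hp a ha]
end

section
/- Let F : F_2^n → F_2^m be bent, i.e., every Walsh coefficient W_F(a,b) with b ≠ 0 equals ±2^{n/2}. Then δ_F(a,b) = 2^{n−m} for all nonzero a ∈ F_2^n and all b ∈ F_2^m; in particular δ(F) = 2^{n−m}, achieving the lower bound δ(F) ≥ 2^{n−m} (perfect nonlinearity). -/
open Matrix

/-- Walsh transform of F at (a,b). -/
def walsh {n m : ℕ} (F : (Fin n → ZMod 2) → (Fin m → ZMod 2))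
    (a : Fin n → ZMod 2) (b : Fin m → ZMod 2) : ℤ :=
  ∑ x : Fin n → ZMod 2,
    (-1 : ℤ) ^ (dotProduct a x + dotProduct b (F x)).val

open Finset

section PNaux

def chi (c : ZMod 2) : ℤ := (-1 : ℤ) ^ c.val

lemma chi_add (a b : ZMod 2) : chi (a + b) = chi a * chi b := by
  revert a b; decide

lemma chi_zero : chi 0 = 1 := rfl

def psi {k : ℕ} (x : Fin k → ZMod 2) : AddChar (Fin k → ZMod 2) ℤ where
  toFun u := chi (u ⬝ᵥ x)
  map_zero_eq_one' := by simp [zero_dotProduct, chi_zero]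
  map_add_eq_mul' a b := by
    show chi ((a + b) ⬝ᵥ x) = chi (a ⬝ᵥ x) * chi (b ⬝ᵥ x)
    rw [add_dotProduct, chi_add]

lemma orth {k : ℕ} (x : Fin k → ZMod 2) :
    ∑ u : Fin k → ZMod 2, chi (u ⬝ᵥ x) = if x = 0 then (2 : ℤ) ^ k else 0 := by
  classical
  have h : ∑ u : Fin k → ZMod 2, chi (u ⬝ᵥ x) = ∑ u, psi x u := rfl
  rw [h, AddChar.sum_eq_ite]
  by_cases hx : x = 0
  · rw [if_pos hx, if_pos, show Fintype.card (Fin k → ZMod 2) = 2 ^ k by simp]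
    · push_cast; ring
    · rw [AddChar.eq_zero_iff]
      intro u; show chi (u ⬝ᵥ x) = 1
      simp [hx, chi_zero]
  · rw [if_neg hx, if_neg]
    refine AddChar.ne_zero_iff.2 ?_
    obtain ⟨j, hj⟩ := Function.ne_iff.1 hx
    refine ⟨Pi.single j 1, ?_⟩
    show chi (Pi.single j 1 ⬝ᵥ x) ≠ 1
    rw [single_dotProduct, one_mul]
    have hj' : x j ≠ 0 := by simpa using hj
    have hx1 : x j = 1 := by
      revert hj'; generalize x j = c
      revert c; decide
    rw [hx1]; decide

end PNaux

lemma vadd_eq_zero {k : ℕ} (x y : Fin k → ZMod 2) : x + y = 0 ↔ x = y := by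
  constructor
  · intro h; funext i
    have h2 : ∀ s t : ZMod 2, s + t = 0 → s = t := by decide
    exact h2 _ _ (congrFun h i)
  · intro h; rw [h]; funext i
    have h2 : ∀ s : ZMod 2, s + s = 0 := by decide
    exact h2 (y i)

lemma walsh_eq {n m : ℕ} (F : (Fin n → ZMod 2) → (Fin m → ZMod 2))
    (a : Fin n → ZMod 2) (b : Fin m → ZMod 2) :
    walsh F a b = ∑ x : Fin n → ZMod 2, chi (a ⬝ᵥ x) * chi (b ⬝ᵥ F x) := by
  refine Finset.sum_congr rfl fun x _ => ?_
  rw [← chi_add]; rfl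

lemma keyB {n m : ℕ} (F : (Fin n → ZMod 2) → (Fin m → ZMod 2))
    (v : Fin m → ZMod 2) (a : Fin n → ZMod 2) :
    ∑ u : Fin n → ZMod 2, chi (u ⬝ᵥ a) * (walsh F u v) ^ 2
      = 2 ^ n * ∑ x : Fin n → ZMod 2, chi (v ⬝ᵥ (F (x + a) + F x)) := by
  classical
  have step1 : ∑ u : Fin n → ZMod 2, chi (u ⬝ᵥ a) * (walsh F u v) ^ 2
      = ∑ u : Fin n → ZMod 2, ∑ x : Fin n → ZMod 2, ∑ y : Fin n → ZMod 2,
          chi (u ⬝ᵥ (a + x + y)) * (chi (v ⬝ᵥ F x) * chi (v ⬝ᵥ F y)) := by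
    refine Finset.sum_congr rfl fun u _ => ?_
    rw [walsh_eq, sq, Finset.sum_mul_sum, Finset.mul_sum]
    refine Finset.sum_congr rfl fun x _ => ?_
    rw [Finset.mul_sum]
    refine Finset.sum_congr rfl fun y _ => ?_
    rw [dotProduct_add, dotProduct_add, chi_add, chi_add]
    ring
  rw [step1, Finset.sum_comm]
  have step2 : ∀ x : Fin n → ZMod 2,
      (∑ u : Fin n → ZMod 2, ∑ y : Fin n → ZMod 2,
        chi (u ⬝ᵥ (a + x + y)) * (chi (v ⬝ᵥ F x) * chi (v ⬝ᵥ F y)))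
      = 2 ^ n * chi (v ⬝ᵥ (F (x + a) + F x)) := by
    intro x
    rw [Finset.sum_comm]
    have step3 : ∀ y : Fin n → ZMod 2,
        (∑ u : Fin n → ZMod 2, chi (u ⬝ᵥ (a + x + y)) * (chi (v ⬝ᵥ F x) * chi (v ⬝ᵥ F y)))
        = (if y = a + x then (2:ℤ)^n else 0) * (chi (v ⬝ᵥ F x) * chi (v ⬝ᵥ F y)) := by
      intro y
      rw [← Finset.sum_mul, orth]
      congr 1
      have : a + x + y = 0 ↔ y = a + x := by
        rw [vadd_eq_zero]; exact eq_comm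
      simp [this]
    calc (∑ y : Fin n → ZMod 2, ∑ u : Fin n → ZMod 2,
            chi (u ⬝ᵥ (a + x + y)) * (chi (v ⬝ᵥ F x) * chi (v ⬝ᵥ F y)))
        = ∑ y : Fin n → ZMod 2,
            (if y = a + x then (2:ℤ)^n else 0) * (chi (v ⬝ᵥ F x) * chi (v ⬝ᵥ F y)) := by
          exact Finset.sum_congr rfl fun y _ => step3 y
      _ = ∑ y : Fin n → ZMod 2,
            (if y = a + x then (2:ℤ)^n * (chi (v ⬝ᵥ F x) * chi (v ⬝ᵥ F y)) else 0) := by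
          refine Finset.sum_congr rfl fun y _ => ?_
          rw [ite_mul, zero_mul]
      _ = 2 ^ n * (chi (v ⬝ᵥ F x) * chi (v ⬝ᵥ F (a + x))) := by
          rw [Finset.sum_ite_eq' Finset.univ (a + x)
            (fun y => (2:ℤ)^n * (chi (v ⬝ᵥ F x) * chi (v ⬝ᵥ F y)))]
          simp
      _ = 2 ^ n * chi (v ⬝ᵥ (F (x + a) + F x)) := by
          rw [dotProduct_add, chi_add, add_comm a x]
          ring
  rw [Finset.sum_congr rfl fun x _ => step2 x, ← Finset.mul_sum]

lemma keyA {n m : ℕ} (F : (Fin n → ZMod 2) → (Fin m → ZMod 2))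
    (a : Fin n → ZMod 2) (b : Fin m → ZMod 2) :
    (2 ^ m : ℤ) * (ddt F a b : ℤ)
      = ∑ v : Fin m → ZMod 2, chi (v ⬝ᵥ b) * ∑ x : Fin n → ZMod 2, chi (v ⬝ᵥ (F (x + a) + F x)) := by
  classical
  have step1 : ∀ v : Fin m → ZMod 2,
      chi (v ⬝ᵥ b) * (∑ x : Fin n → ZMod 2, chi (v ⬝ᵥ (F (x + a) + F x)))
      = ∑ x : Fin n → ZMod 2, chi (v ⬝ᵥ (b + (F (x + a) + F x))) := by
    intro v
    rw [Finset.mul_sum]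
    refine Finset.sum_congr rfl fun x _ => ?_
    conv_rhs => rw [dotProduct_add, chi_add]
  rw [Finset.sum_congr rfl fun v _ => step1 v, Finset.sum_comm]
  have step2 : ∀ x : Fin n → ZMod 2,
      (∑ v : Fin m → ZMod 2, chi (v ⬝ᵥ (b + (F (x + a) + F x))))
      = if F (x + a) + F x = b then (2:ℤ)^m else 0 := by
    intro x
    rw [orth]
    have h : b + (F (x + a) + F x) = 0 ↔ F (x + a) + F x = b := by
      rw [vadd_eq_zero]; exact eq_comm
    simp only [h]
  rw [Finset.sum_congr rfl fun x _ => step2 x, ← Finset.sum_filter, Finset.sum_const,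
    nsmul_eq_mul, ddt, mul_comm]


theorem bent_implies_perfect_nonlinear {n m : ℕ}
    (F : (Fin n → ZMod 2) → (Fin m → ZMod 2))
    (hbent : ∀ (a : Fin n → ZMod 2) (b : Fin m → ZMod 2), b ≠ 0 →
      walsh F a b = 2 ^ (n / 2) ∨ walsh F a b = -(2 ^ (n / 2))) :
    ∀ a : Fin n → ZMod 2, a ≠ 0 → ∀ b : Fin m → ZMod 2,
      ddt F a b = 2 ^ (n - m) := by
  intro a ha b
  classical
  have h2n : ((2:ℤ) ^ n) ≠ 0 := by positivity
  have hS0 : (∑ x : Fin n → ZMod 2, chi ((0 : Fin m → ZMod 2) ⬝ᵥ (F (x + a) + F x)))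
      = 2 ^ n := by
    simp only [zero_dotProduct, chi_zero]
    simp
  have hSv : ∀ v : Fin m → ZMod 2, v ≠ 0 →
      (∑ x : Fin n → ZMod 2, chi (v ⬝ᵥ (F (x + a) + F x))) = 0 := by
    intro v hv
    have hB := keyB F v a
    have hW : ∀ u : Fin n → ZMod 2, (walsh F u v) ^ 2 = ((2:ℤ) ^ (n / 2)) ^ 2 := by
      intro u; rcases hbent u v hv with h | h <;> rw [h] <;> ring
    have hL : ∑ u : Fin n → ZMod 2, chi (u ⬝ᵥ a) * (walsh F u v) ^ 2 = 0 := by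
      calc ∑ u : Fin n → ZMod 2, chi (u ⬝ᵥ a) * (walsh F u v) ^ 2
          = (∑ u : Fin n → ZMod 2, chi (u ⬝ᵥ a)) * ((2:ℤ) ^ (n / 2)) ^ 2 := by
            rw [Finset.sum_mul]
            exact Finset.sum_congr rfl fun u _ => by rw [hW u]
        _ = 0 := by rw [orth, if_neg ha, zero_mul]
    rw [hL] at hB
    exact (mul_eq_zero.1 hB.symm).resolve_left h2n
  have key : (2 ^ m : ℤ) * (ddt F a b : ℤ) = 2 ^ n := by
    rw [keyA F a b, Finset.sum_eq_single (0 : Fin m → ZMod 2)]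
    · rw [hS0, zero_dotProduct, chi_zero, one_mul]
    · intro v _ hv
      rw [hSv v hv, mul_zero]
    · intro h; exact absurd (Finset.mem_univ 0) h
  have hd0 : ddt F a b ≠ 0 := by
    intro h0
    rw [h0] at key
    simp at key
    exact h2n key.symm
  have hd1 : (1:ℤ) ≤ (ddt F a b : ℤ) := by
    exact_mod_cast Nat.one_le_iff_ne_zero.2 hd0
  have hmn : m ≤ n := by
    have hle : (2:ℤ) ^ m ≤ 2 ^ n := by
      calc (2:ℤ) ^ m = 2 ^ m * 1 := (mul_one _).symm
        _ ≤ 2 ^ m * (ddt F a b : ℤ) :=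
            mul_le_mul_of_nonneg_left hd1 (by positivity)
        _ = 2 ^ n := key
    exact (pow_le_pow_iff_right₀ one_lt_two).1 hle
  have hsplit : (2:ℤ) ^ n = 2 ^ m * 2 ^ (n - m) := by
    rw [← pow_add]; congr 1; omega
  rw [hsplit] at key
  have := mul_left_cancel₀ (by positivity : ((2:ℤ)^m) ≠ 0) key
  exact_mod_cast this
end
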